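/- arXiv:1007.4025 — 9 statements merged into one kernel-verified Lean document; each statement's English description precedes it below -/
import Mathlib

section
/- Let u : ℝ → ℂ be continuously differentiable with compact support. Then for every R ≥ 0, sup_{r > R} |u(r)| ≤ 2 ‖u'‖_{L²(R,∞)}^{3/4} · ‖r·u‖_{L²(R,∞)}^{1/4}. -/
open MeasureTheory Set

private lemma rpow_two_eq (x : ℝ) : x ^ (2:ℝ) = x ^ 2 := by
  rw [show (2:ℝ) = ((2:ℕ):ℝ) by norm_num, Real.rpow_natCast]

set_option maxHeartbeats 1000000 in
/-- For `u : ℝ → ℂ` continuously differentiable with compact support and `R ≥ 0`,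
`sup_{r > R} |u(r)| ≤ 2 ‖u'‖_{L²(R,∞)}^{3/4} ‖r·u‖_{L²(R,∞)}^{1/4}`. -/
theorem stmt2 (u : ℝ → ℂ) (hu : ContDiff ℝ 1 u) (hsupp : HasCompactSupport u)
    (R : ℝ) (hR : 0 ≤ R) :
    ∀ r ∈ Set.Ioi R, ‖u r‖ ≤
      2 * Real.sqrt (∫ r in Set.Ioi R, ‖deriv u r‖ ^ 2) ^ ((3 : ℝ) / 4) *
        Real.sqrt (∫ r in Set.Ioi R, r ^ 2 * ‖u r‖ ^ 2) ^ ((1 : ℝ) / 4) := by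
  intro r hr
  have hr' : R < r := hr
  have hucont : Continuous u := hu.continuous
  have hu'cont : Continuous (deriv u) := hu.continuous_deriv le_rfl
  set f : ℝ → ℝ := fun s => ‖u s‖ ^ 2 with hfdef
  set g : ℝ → ℝ := fun s => 2 * (inner ℝ (u s) (deriv u s) : ℝ) with hgdef
  have hfd : ∀ s : ℝ, HasDerivAt f (g s) s := fun s =>
    ((hu.differentiable one_ne_zero) s).hasDerivAt.norm_sq
  have hgcont : Continuous g := continuous_const.mul (hucont.inner hu'cont)
  have hfcont : Continuous f := (hucont.norm).pow 2
  have hgbound : ∀ s, |g s| ≤ 2 * (‖deriv u s‖ * ‖u s‖) := by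
    intro s
    have h1 : |(inner ℝ (u s) (deriv u s) : ℝ)| ≤ ‖u s‖ * ‖deriv u s‖ :=
      abs_real_inner_le_norm _ _
    calc |g s| = 2 * |(inner ℝ (u s) (deriv u s) : ℝ)| := by
          rw [hgdef, abs_mul, abs_two]
      _ ≤ 2 * (‖deriv u s‖ * ‖u s‖) := by nlinarith
  -- choose T beyond support
  obtain ⟨M, hM⟩ := (hsupp : IsCompact (tsupport u)).isBounded.subset_closedBall 0
  set T : ℝ := max M (max r R) + 1 with hTdef
  have hrT : r < T := by
    have : r ≤ max M (max r R) := le_trans (le_max_left r R) (le_max_right _ _)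
    linarith
  have hRT : R < T := lt_trans hr' hrT
  have huT : ∀ s, T ≤ s → u s = 0 := by
    intro s hs
    apply image_eq_zero_of_notMem_tsupport
    intro hmem
    have h1 := hM hmem
    rw [Metric.mem_closedBall, Real.dist_eq, sub_zero] at h1
    have h2 : M ≤ max M (max r R) := le_max_left _ _
    have h3 : s ≤ M := le_trans (le_abs_self s) h1
    linarith
  -- compact support facts
  have hcs_nu : HasCompactSupport (fun s => ‖u s‖) :=
    hsupp.comp_left (g := fun z : ℂ => ‖z‖) norm_zero
  have hcs_nu' : HasCompactSupport (fun s => ‖deriv u s‖) :=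
    hsupp.deriv.comp_left (g := fun z : ℂ => ‖z‖) norm_zero
  have hcs_f : HasCompactSupport f :=
    hsupp.comp_left (g := fun z : ℂ => ‖z‖ ^ 2) (by simp)
  have hcs_g1 : HasCompactSupport (fun s => ‖deriv u s‖ * ‖u s‖) := hcs_nu.mul_left
  have hcs_g2 : HasCompactSupport (fun s => ‖deriv u s‖ * (s * ‖u s‖)) := by
    have : HasCompactSupport (fun s => s * ‖u s‖) := hcs_nu.mul_left
    exact this.mul_left
  have hc_g1 : Continuous (fun s => ‖deriv u s‖ * ‖u s‖) := hu'cont.norm.mul hucont.norm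
  have hc_g2 : Continuous (fun s => ‖deriv u s‖ * (s * ‖u s‖)) :=
    hu'cont.norm.mul (continuous_id.mul hucont.norm)
  have hint_g1 : IntegrableOn (fun s => ‖deriv u s‖ * ‖u s‖) (Ioi R) :=
    (hc_g1.integrable_of_hasCompactSupport hcs_g1).integrableOn
  have hint_g2 : IntegrableOn (fun s => ‖deriv u s‖ * (s * ‖u s‖)) (Ioi R) :=
    (hc_g2.integrable_of_hasCompactSupport hcs_g2).integrableOn
  have hint_f : IntegrableOn f (Ioi R) :=
    (hfcont.integrable_of_hasCompactSupport hcs_f).integrableOn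
  -- MemLp facts
  have two_conj : Real.HolderConjugate 2 2 := Real.holderConjugate_iff.mpr ⟨one_lt_two, by norm_num⟩
  have mem1 : MemLp (fun s => ‖deriv u s‖) (ENNReal.ofReal 2) (volume.restrict (Ioi R)) :=
    (hu'cont.norm.memLp_of_hasCompactSupport hcs_nu').restrict _
  have mem2 : MemLp (fun s => ‖u s‖) (ENNReal.ofReal 2) (volume.restrict (Ioi R)) :=
    (hucont.norm.memLp_of_hasCompactSupport hcs_nu).restrict _
  have mem3 : MemLp (fun s => s * ‖u s‖) (ENNReal.ofReal 2) (volume.restrict (Ioi R)) :=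
    ((continuous_id.mul hucont.norm).memLp_of_hasCompactSupport hcs_nu.mul_left).restrict _
  -- Cauchy-Schwarz 1
  have CS1 : (∫ s in Ioi R, ‖deriv u s‖ * ‖u s‖) ≤
      Real.sqrt (∫ s in Ioi R, ‖deriv u s‖ ^ 2) * Real.sqrt (∫ s in Ioi R, ‖u s‖ ^ 2) := by
    have h := integral_mul_le_Lp_mul_Lq_of_nonneg two_conj
      (f := fun s => ‖deriv u s‖) (g := fun s => ‖u s‖)
      (ae_of_all _ fun s => norm_nonneg _) (ae_of_all _ fun s => norm_nonneg _) mem1 mem2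
    simp_rw [rpow_two_eq] at h
    rw [Real.sqrt_eq_rpow, Real.sqrt_eq_rpow]
    exact h
  -- Cauchy-Schwarz 2
  have CS2 : (∫ s in Ioi R, ‖deriv u s‖ * (s * ‖u s‖)) ≤
      Real.sqrt (∫ s in Ioi R, ‖deriv u s‖ ^ 2) *
        Real.sqrt (∫ s in Ioi R, s ^ 2 * ‖u s‖ ^ 2) := by
    have h := integral_mul_le_Lp_mul_Lq_of_nonneg two_conj
      (f := fun s => ‖deriv u s‖) (g := fun s => s * ‖u s‖)
      (ae_of_all _ fun s => norm_nonneg _)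
      (by filter_upwards [ae_restrict_mem measurableSet_Ioi] with s hs
          exact mul_nonneg (le_of_lt (lt_of_le_of_lt hR hs)) (norm_nonneg _)) mem1 mem3
    simp_rw [rpow_two_eq, mul_pow] at h
    rw [Real.sqrt_eq_rpow, Real.sqrt_eq_rpow]
    exact h
  -- pointwise estimate
  have hstep1 : ‖u r‖ ^ 2 ≤ 2 * ∫ s in Ioi R, ‖deriv u s‖ * ‖u s‖ := by
    have hftc := intervalIntegral.integral_eq_sub_of_hasDerivAt
      (f := f) (f' := g) (a := r) (b := T) (fun x _ => hfd x) (hgcont.intervalIntegrable r T)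
    have hfT : f T = 0 := by simp [hfdef, huT T le_rfl]
    have hfr : f r = ∫ s in r..T, -g s := by
      rw [intervalIntegral.integral_neg, hftc, hfT]; ring
    have h2 : f r ≤ ∫ s in r..T, 2 * (‖deriv u s‖ * ‖u s‖) := by
      rw [hfr]
      apply intervalIntegral.integral_mono_on hrT.le
        (hgcont.neg.intervalIntegrable r T)
        ((continuous_const.mul hc_g1).intervalIntegrable r T)
      intro s _
      exact le_trans (neg_le_abs _) (hgbound s)
    have h3 : (∫ s in r..T, 2 * (‖deriv u s‖ * ‖u s‖)) ≤
        2 * ∫ s in Ioi R, ‖deriv u s‖ * ‖u s‖ := by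
      rw [intervalIntegral.integral_const_mul]
      have h4 : (∫ s in Ioc r T, ‖deriv u s‖ * ‖u s‖) ≤
          ∫ s in Ioi R, ‖deriv u s‖ * ‖u s‖ := by
        apply setIntegral_mono_set hint_g1
        · filter_upwards with s using mul_nonneg (norm_nonneg _) (norm_nonneg _)
        · exact (Ioc_subset_Ioi_self.trans (Ioi_subset_Ioi hr'.le)).eventuallyLE
      rw [intervalIntegral.integral_of_le hrT.le]
      linarith
    exact le_trans h2 h3
  -- integration by parts estimate
  have hstep2 : (∫ s in Ioi R, f s) ≤ 2 * ∫ s in Ioi R, ‖deriv u s‖ * (s * ‖u s‖) := by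
    have hsplit : (∫ s in Ioi R, f s) = ∫ s in R..T, f s := by
      rw [intervalIntegral.integral_of_le hRT.le, ← Ioc_union_Ioi_eq_Ioi hRT.le,
        setIntegral_union (Ioc_disjoint_Ioi le_rfl) measurableSet_Ioi
          (hint_f.mono_set Ioc_subset_Ioi_self)
          (hint_f.mono_set (Ioi_subset_Ioi hRT.le))]
      · have : (∫ s in Ioi T, f s) = 0 := by
          apply setIntegral_eq_zero_of_forall_eq_zero
          intro x hx
          simp [hfdef, huT x (le_of_lt hx)]
        rw [this, add_zero]
    have hibp := intervalIntegral.integral_mul_deriv_eq_deriv_mul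
      (u := fun s : ℝ => s) (u' := fun _ => (1:ℝ)) (v := f) (v' := g)
      (a := R) (b := T)
      (fun x _ => hasDerivAt_id x) (fun x _ => hfd x)
      (intervalIntegrable_const) (hgcont.intervalIntegrable R T)
    have hfT : f T = 0 := by simp [hfdef, huT T le_rfl]
    simp_rw [one_mul, hfT, mul_zero, zero_sub] at hibp
    -- hibp : ∫ s in R..T, s * g s = -(R * f R) - ∫ s in R..T, f s
    have key : (∫ s in R..T, f s) = -(R * f R) - ∫ s in R..T, s * g s := by linarith
    have hfR0 : 0 ≤ R * f R := mul_nonneg hR (sq_nonneg _)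
    have h6 : (∫ s in R..T, f s) ≤ ∫ s in R..T, 2 * (‖deriv u s‖ * (s * ‖u s‖)) := by
      have hneg : -(∫ s in R..T, s * g s) = ∫ s in R..T, -(s * g s) :=
        intervalIntegral.integral_neg.symm
      have h7 : (∫ s in R..T, -(s * g s)) ≤
          ∫ s in R..T, 2 * (‖deriv u s‖ * (s * ‖u s‖)) := by
        apply intervalIntegral.integral_mono_on hRT.le
          (((continuous_id.mul hgcont).neg).intervalIntegrable R T)
          ((continuous_const.mul hc_g2).intervalIntegrable R T)
        intro s hs
        have hs0 : 0 ≤ s := le_trans hR hs.1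
        have h8 : -g s ≤ 2 * (‖deriv u s‖ * ‖u s‖) := le_trans (neg_le_abs _) (hgbound s)
        calc -(s * g s) = s * -g s := by ring
          _ ≤ s * (2 * (‖deriv u s‖ * ‖u s‖)) := mul_le_mul_of_nonneg_left h8 hs0
          _ = 2 * (‖deriv u s‖ * (s * ‖u s‖)) := by ring
      linarith [key, hneg ▸ h7]
    have h9 : (∫ s in R..T, 2 * (‖deriv u s‖ * (s * ‖u s‖))) ≤
        2 * ∫ s in Ioi R, ‖deriv u s‖ * (s * ‖u s‖) := by
      rw [intervalIntegral.integral_const_mul, intervalIntegral.integral_of_le hRT.le]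
      have : (∫ s in Ioc R T, ‖deriv u s‖ * (s * ‖u s‖)) ≤
          ∫ s in Ioi R, ‖deriv u s‖ * (s * ‖u s‖) := by
        apply setIntegral_mono_set hint_g2
        · filter_upwards [ae_restrict_mem measurableSet_Ioi] with s hs
          exact mul_nonneg (norm_nonneg _)
            (mul_nonneg (le_of_lt (lt_of_le_of_lt hR hs)) (norm_nonneg _))
        · exact Ioc_subset_Ioi_self.eventuallyLE
      linarith
    rw [hsplit]
    exact le_trans h6 h9
  -- assemble
  set a : ℝ := Real.sqrt (∫ s in Ioi R, ‖deriv u s‖ ^ 2) with hadef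
  set b : ℝ := Real.sqrt (∫ s in Ioi R, s ^ 2 * ‖u s‖ ^ 2) with hbdef
  set c : ℝ := Real.sqrt (∫ s in Ioi R, ‖u s‖ ^ 2) with hcdef
  have ha : 0 ≤ a := Real.sqrt_nonneg _
  have hb : 0 ≤ b := Real.sqrt_nonneg _
  have hc : 0 ≤ c := Real.sqrt_nonneg _
  have hC2nonneg : 0 ≤ ∫ s in Ioi R, ‖u s‖ ^ 2 :=
    setIntegral_nonneg measurableSet_Ioi fun s _ => sq_nonneg _
  have hx2 : ‖u r‖ ^ 2 ≤ 2 * (a * c) := by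
    refine le_trans hstep1 ?_
    have := CS1
    nlinarith
  have hc2 : c ^ 2 ≤ 2 * (a * b) := by
    rw [hcdef, Real.sq_sqrt hC2nonneg]
    refine le_trans hstep2 ?_
    nlinarith [CS2]
  have hrhs : (0:ℝ) ≤ 2 * a ^ ((3:ℝ)/4) * b ^ ((1:ℝ)/4) := by positivity
  refine le_of_pow_le_pow_left₀ (n := 4) (by norm_num) hrhs ?_
  have hpow : (2 * a ^ ((3:ℝ)/4) * b ^ ((1:ℝ)/4)) ^ 4 = 16 * (a ^ 3 * b) := by
    rw [mul_pow, mul_pow, ← Real.rpow_natCast (a ^ ((3:ℝ)/4)) 4,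
      ← Real.rpow_natCast (b ^ ((1:ℝ)/4)) 4, ← Real.rpow_mul ha, ← Real.rpow_mul hb,
      show ((3:ℝ)/4 * (4:ℕ)) = ((3:ℕ):ℝ) by norm_num,
      show ((1:ℝ)/4 * (4:ℕ)) = (1:ℝ) by norm_num,
      Real.rpow_natCast, Real.rpow_one]
    norm_num; ring
  rw [hpow]
  have h1 : ‖u r‖ ^ 2 * ‖u r‖ ^ 2 ≤ (2 * (a * c)) * (2 * (a * c)) :=
    mul_le_mul hx2 hx2 (sq_nonneg _) (by positivity)
  have h2 : (4 * a ^ 2) * c ^ 2 ≤ (4 * a ^ 2) * (2 * (a * b)) :=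
    mul_le_mul_of_nonneg_left hc2 (by positivity)
  nlinarith [mul_nonneg (mul_nonneg (mul_nonneg ha ha) ha) hb]
end

section
/- Let u : ℝ → ℂ be continuously differentiable with compact support. Then for every R ≥ 0, ∫_R^∞ |u(r)|⁴ dr ≤ 8 ‖u'‖_{L²(R,∞)}^{5/2} · ‖r·u‖_{L²(R,∞)}^{3/2}. -/
open MeasureTheory Set

set_option maxHeartbeats 1000000

lemma cs_aux (R : ℝ) (g h : ℝ → ℝ) (hg : Continuous g) (hh : Continuous h)
    (hgs : HasCompactSupport g) (hhs : HasCompactSupport h)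
    (hgn : ∀ x, 0 ≤ g x) (hhn : ∀ x, 0 ≤ h x) :
    ∫ s in Ioi R, g s * h s ≤
      Real.sqrt (∫ s in Ioi R, g s ^ 2) * Real.sqrt (∫ s in Ioi R, h s ^ 2) := by
  have hgm : MemLp g (ENNReal.ofReal 2) (volume.restrict (Ioi R)) := by
    have := (hg.memLp_of_hasCompactSupport (μ := volume) (p := 2) hgs).restrict (Ioi R)
    simpa [ENNReal.ofReal_ofNat] using this
  have hhm : MemLp h (ENNReal.ofReal 2) (volume.restrict (Ioi R)) := by
    have := (hh.memLp_of_hasCompactSupport (μ := volume) (p := 2) hhs).restrict (Ioi R)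
    simpa [ENNReal.ofReal_ofNat] using this
  have key := integral_mul_le_Lp_mul_Lq_of_nonneg (μ := volume.restrict (Ioi R))
    (p := 2) (q := 2) ⟨by norm_num, by norm_num, by norm_num⟩
    (Filter.Eventually.of_forall hgn) (Filter.Eventually.of_forall hhn) hgm hhm
  have e1 : ∀ (f : ℝ → ℝ), (∫ s in Ioi R, f s ^ (2:ℝ)) = ∫ s in Ioi R, f s ^ 2 := by
    intro f; apply integral_congr_ae; filter_upwards with x; rw [Real.rpow_two]
  rw [e1, e1] at key
  calc ∫ s in Ioi R, g s * h s ≤ _ := key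
    _ = _ := by
        rw [Real.sqrt_eq_rpow, Real.sqrt_eq_rpow]

lemma hcs_mul_fun {f : ℝ → ℝ} (hf : HasCompactSupport f) (g : ℝ → ℝ) :
    HasCompactSupport (fun x => g x * f x) := hf.mul_left

lemma hcs_abs {f : ℝ → ℝ} (hf : HasCompactSupport f) :
    HasCompactSupport (fun x => |f x|) := hf.abs

/-- For `u : ℝ → ℂ` continuously differentiable with compact support and `R ≥ 0`,
`∫_R^∞ |u(r)|⁴ dr ≤ 8 ‖u'‖_{L²(R,∞)}^{5/2} ‖r·u‖_{L²(R,∞)}^{3/2}`. -/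
theorem stmt3 (u : ℝ → ℂ) (hu : ContDiff ℝ 1 u) (hsupp : HasCompactSupport u)
    (R : ℝ) (hR : 0 ≤ R) :
    (∫ r in Set.Ioi R, ‖u r‖ ^ 4) ≤
      8 * Real.sqrt (∫ r in Set.Ioi R, ‖deriv u r‖ ^ 2) ^ ((5 : ℝ) / 2) *
        Real.sqrt (∫ r in Set.Ioi R, r ^ 2 * ‖u r‖ ^ 2) ^ ((3 : ℝ) / 2) := by
  have huc : Continuous u := hu.continuous
  have hu'c : Continuous (deriv u) := hu.continuous_deriv le_rfl
  have hsupp' : HasCompactSupport (deriv u) := hsupp.deriv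
  set f : ℝ → ℝ := fun s => ‖u s‖ ^ 2 with hf_def
  have hfc : ContDiff ℝ 1 f := hu.norm_sq ℂ
  have hfcont : Continuous f := hfc.continuous
  have hf'c : Continuous (deriv f) := hfc.continuous_deriv le_rfl
  have hfnn : ∀ x, 0 ≤ f x := fun x => sq_nonneg _
  have hfs : HasCompactSupport f := by
    simpa [hf_def, pow_two, Pi.mul_def] using (hsupp.norm).mul_right (f' := fun s => ‖u s‖)
  have hfd : ∀ x, HasDerivAt f (2 * (inner ℝ (u x) (deriv u x) : ℝ)) x :=
    fun x => ((hu.differentiable one_ne_zero x).hasDerivAt).norm_sq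
  have hbound : ∀ x, |deriv f x| ≤ 2 * (‖u x‖ * ‖deriv u x‖) := by
    intro x
    rw [(hfd x).deriv, abs_mul, abs_two]
    exact mul_le_mul_of_nonneg_left (abs_real_inner_le_norm _ _) (by norm_num)
  set A := Real.sqrt (∫ r in Ioi R, ‖deriv u r‖ ^ 2) with hA_def
  set B := Real.sqrt (∫ r in Ioi R, ‖u r‖ ^ 2) with hB_def
  set C := Real.sqrt (∫ r in Ioi R, r ^ 2 * ‖u r‖ ^ 2) with hC_def
  have hA0 : 0 ≤ A := Real.sqrt_nonneg _
  have hB0 : 0 ≤ B := Real.sqrt_nonneg _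
  have hC0 : 0 ≤ C := Real.sqrt_nonneg _
  -- compact support / integrability facts
  have hcs1 : HasCompactSupport (fun s => ‖u s‖ * ‖deriv u s‖) :=
    (hsupp.norm).mul_right
  have hint1 : IntegrableOn (fun s => ‖u s‖ * ‖deriv u s‖) (Ioi R) :=
    ((huc.norm.mul hu'c.norm).integrable_of_hasCompactSupport hcs1).integrableOn
  have hintf : IntegrableOn f (Ioi R) :=
    (hfcont.integrable_of_hasCompactSupport hfs).integrableOn
  have hintdf : ∀ r : ℝ, IntegrableOn (fun x => |deriv f x|) (Ioi r) := fun r =>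
    ((hf'c.abs).integrable_of_hasCompactSupport hfs.deriv.abs).integrableOn
  -- Cauchy-Schwarz 1 : ∫ ‖u‖‖u'‖ ≤ B * A
  have hCS1 : (∫ s in Ioi R, ‖u s‖ * ‖deriv u s‖) ≤ B * A :=
    cs_aux R _ _ huc.norm hu'c.norm hsupp.norm hsupp'.norm
      (fun x => norm_nonneg _) (fun x => norm_nonneg _)
  -- sup bound : f r ≤ 2 * (B * A) for r ∈ Ioi R
  have hsup : ∀ r, R ≤ r → f r ≤ 2 * (B * A) := by
    intro r hr
    have h1 : (∫ x in Ioi r, deriv f x) = - f r := hfs.integral_Ioi_deriv_eq hfc r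
    have h3 : f r ≤ ∫ x in Ioi r, |deriv f x| := by
      have hn := norm_integral_le_integral_norm (μ := volume.restrict (Ioi r)) (deriv f)
      simp only [Real.norm_eq_abs] at hn
      calc f r = -∫ x in Ioi r, deriv f x := by rw [h1]; ring
        _ ≤ |∫ x in Ioi r, deriv f x| := neg_le_abs _
        _ ≤ _ := hn
    have h4 : (∫ x in Ioi r, |deriv f x|) ≤ ∫ x in Ioi r, 2 * (‖u x‖ * ‖deriv u x‖) :=
      setIntegral_mono_on (hintdf r)
        (((huc.norm.mul hu'c.norm).integrable_of_hasCompactSupport hcs1).integrableOn.const_mul 2)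
        measurableSet_Ioi (fun x _ => hbound x)
    have h5 : (∫ x in Ioi r, 2 * (‖u x‖ * ‖deriv u x‖)) ≤
        ∫ x in Ioi R, 2 * (‖u x‖ * ‖deriv u x‖) := by
      apply setIntegral_mono_set (hint1.const_mul 2)
        (Filter.Eventually.of_forall fun x => by positivity)
        (HasSubset.Subset.eventuallyLE (Ioi_subset_Ioi hr))
    have h6 : (∫ x in Ioi R, 2 * (‖u x‖ * ‖deriv u x‖)) ≤ 2 * (B * A) := by
      rw [integral_const_mul]
      nlinarith [hCS1]
    linarith
  -- second estimate : B ^ 2 ≤ 2 * (C * A)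
  have hB2eq : B ^ 2 = ∫ r in Ioi R, ‖u r‖ ^ 2 :=
    Real.sq_sqrt (integral_nonneg fun x => sq_nonneg _)
  have hB2 : B ^ 2 ≤ 2 * (C * A) := by
    set g : ℝ → ℝ := fun s => s * f s with hg_def
    have hgc : ContDiff ℝ 1 g := contDiff_id.mul hfc
    have hgs : HasCompactSupport g := hcs_mul_fun hfs (fun s => s)
    have hgd : ∀ x, deriv g x = f x + x * deriv f x := by
      intro x
      have h := (hasDerivAt_id x).mul ((hfc.differentiable one_ne_zero x).hasDerivAt)
      simpa [hg_def, Pi.mul_def] using h.deriv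
    have h1 : (∫ x in Ioi R, deriv g x) = - (R * f R) := hgs.integral_Ioi_deriv_eq hgc R
    have hintxdf : IntegrableOn (fun x => x * deriv f x) (Ioi R) :=
      ((continuous_id.mul hf'c).integrable_of_hasCompactSupport (hcs_mul_fun hfs.deriv (fun x => x))).integrableOn
    have h2 : (∫ x in Ioi R, deriv g x) = (∫ x in Ioi R, f x) + ∫ x in Ioi R, x * deriv f x := by
      rw [← integral_add hintf hintxdf]
      exact setIntegral_congr_fun measurableSet_Ioi (fun x _ => hgd x)
    have h3 : (∫ x in Ioi R, f x) ≤ - ∫ x in Ioi R, x * deriv f x := by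
      have : - (R * f R) ≤ 0 := by
        have := hfnn R; nlinarith
      linarith [h1, h2]
    have h4 : (- ∫ x in Ioi R, x * deriv f x) ≤ ∫ x in Ioi R, |x| * |deriv f x| := by
      have hn := norm_integral_le_integral_norm (μ := volume.restrict (Ioi R))
        (fun x => x * deriv f x)
      simp only [Real.norm_eq_abs, abs_mul] at hn
      exact le_trans (neg_le_abs _) hn
    have h5 : (∫ x in Ioi R, |x| * |deriv f x|) ≤
        ∫ x in Ioi R, 2 * ((|x| * ‖u x‖) * ‖deriv u x‖) := by
      apply setIntegral_mono_on
      · exact ((continuous_abs.mul hf'c.abs).integrable_of_hasCompactSupport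
          (hcs_mul_fun (hcs_abs hfs.deriv) (fun x => |x|))).integrableOn
      · have hcsx : HasCompactSupport (fun x : ℝ => (|x| * ‖u x‖) * ‖deriv u x‖) := by
          simpa [mul_assoc] using hcs_mul_fun hcs1 (fun x => |x|)
        exact ((((continuous_abs.mul huc.norm).mul hu'c.norm).integrable_of_hasCompactSupport
          hcsx).integrableOn.const_mul 2)
      · exact measurableSet_Ioi
      · intro x _
        have := hbound x
        have h0 : 0 ≤ |x| := abs_nonneg x
        nlinarith [abs_nonneg (deriv f x), norm_nonneg (u x), norm_nonneg (deriv u x)]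
    have hCS2 : (∫ s in Ioi R, (|s| * ‖u s‖) * ‖deriv u s‖) ≤ C * A := by
      have key := cs_aux R (fun s => |s| * ‖u s‖) (fun s => ‖deriv u s‖)
        (continuous_abs.mul huc.norm) hu'c.norm (hcs_mul_fun hsupp.norm (fun s => |s|)) hsupp'.norm
        (fun x => mul_nonneg (abs_nonneg _) (norm_nonneg _)) (fun x => norm_nonneg _)
      have e : (∫ s in Ioi R, (|s| * ‖u s‖) ^ 2) = ∫ s in Ioi R, s ^ 2 * ‖u s‖ ^ 2 := by
        apply integral_congr_ae; filter_upwards with x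
        rw [mul_pow, sq_abs]
      rwa [e] at key
    have h6 : (∫ x in Ioi R, 2 * ((|x| * ‖u x‖) * ‖deriv u x‖)) ≤ 2 * (C * A) := by
      rw [integral_const_mul]; linarith
    calc B ^ 2 = ∫ x in Ioi R, f x := hB2eq
      _ ≤ 2 * (C * A) := by linarith
  -- main chain
  have hmain : (∫ r in Ioi R, ‖u r‖ ^ 4) ≤ 2 * (B * A) * B ^ 2 := by
    have step : (∫ r in Ioi R, ‖u r‖ ^ 4) ≤ ∫ r in Ioi R, 2 * (B * A) * f r := by
      apply setIntegral_mono_on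
      · refine ((huc.norm.pow 4).integrable_of_hasCompactSupport ?_).integrableOn
        have h4eq : (fun s : ℝ => ‖u s‖ ^ 4) = fun s => f s * f s := by
          funext s; simp only [hf_def]; ring
        show HasCompactSupport (fun s : ℝ => ‖u s‖ ^ 4)
        rw [h4eq]; exact hcs_mul_fun hfs f
      · exact hintf.const_mul _
      · exact measurableSet_Ioi
      · intro x hx
        have h1 : f x ≤ 2 * (B * A) := hsup x (le_of_lt hx)
        have h2 : ‖u x‖ ^ 4 = f x * f x := by rw [hf_def]; ring
        rw [h2]
        exact mul_le_mul_of_nonneg_right h1 (hfnn x)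
    rw [integral_const_mul] at step
    rw [hB2eq]
    exact step
  -- rpow arithmetic
  have hB3 : B ^ 3 ≤ (2 * (C * A)) ^ ((3:ℝ)/2) := by
    have e1 : (B ^ 2 : ℝ) ^ ((3:ℝ)/2) = B ^ 3 := by
      rw [← Real.rpow_natCast B 2, ← Real.rpow_mul hB0, ← Real.rpow_natCast B 3]
      norm_num
    calc B ^ 3 = (B ^ 2 : ℝ) ^ ((3:ℝ)/2) := e1.symm
      _ ≤ (2 * (C * A)) ^ ((3:ℝ)/2) :=
        Real.rpow_le_rpow (sq_nonneg B) hB2 (by norm_num)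
  have hexp : (2 * (C * A)) ^ ((3:ℝ)/2) = 2 ^ ((3:ℝ)/2) * (C ^ ((3:ℝ)/2) * A ^ ((3:ℝ)/2)) := by
    rw [Real.mul_rpow (by norm_num) (mul_nonneg hC0 hA0), Real.mul_rpow hC0 hA0]
  have hAA : A * A ^ ((3:ℝ)/2) = A ^ ((5:ℝ)/2) := by
    have h52 : ((5:ℝ)/2) = 1 + 3/2 := by norm_num
    rw [h52, Real.rpow_add' hA0 (by norm_num), Real.rpow_one]
  have h2pow : (2:ℝ) ^ ((3:ℝ)/2) ≤ 4 := by
    have h1 : (2:ℝ) ^ ((3:ℝ)/2) ≤ 2 ^ (2:ℝ) :=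
      Real.rpow_le_rpow_of_exponent_le (by norm_num) (by norm_num)
    have h2 : (2:ℝ) ^ (2:ℝ) = 4 := by
      rw [show (2:ℝ) = ((2:ℕ):ℝ) by norm_num, Real.rpow_natCast]; norm_num
    linarith
  have hApos : 0 ≤ A ^ ((3:ℝ)/2) := Real.rpow_nonneg hA0 _
  have hA5 : 0 ≤ A ^ ((5:ℝ)/2) := Real.rpow_nonneg hA0 _
  have hC3 : 0 ≤ C ^ ((3:ℝ)/2) := Real.rpow_nonneg hC0 _
  calc (∫ r in Ioi R, ‖u r‖ ^ 4) ≤ 2 * (B * A) * B ^ 2 := hmain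
    _ = 2 * A * B ^ 3 := by ring
    _ ≤ 2 * A * (2 ^ ((3:ℝ)/2) * (C ^ ((3:ℝ)/2) * A ^ ((3:ℝ)/2))) := by
        rw [← hexp]
        exact mul_le_mul_of_nonneg_left hB3 (by positivity)
    _ = (2 * 2 ^ ((3:ℝ)/2)) * (A * A ^ ((3:ℝ)/2)) * C ^ ((3:ℝ)/2) := by ring
    _ = (2 * 2 ^ ((3:ℝ)/2)) * A ^ ((5:ℝ)/2) * C ^ ((3:ℝ)/2) := by rw [hAA]
    _ ≤ 8 * A ^ ((5:ℝ)/2) * C ^ ((3:ℝ)/2) := by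
        nlinarith [mul_nonneg hA5 hC3, h2pow,
          Real.rpow_nonneg (by norm_num : (0:ℝ) ≤ 2) ((3:ℝ)/2)]
end

section
/- Let u : ℝ → ℂ be continuously differentiable with compact support. Then for every R ≥ 0, ∫_R^∞ |u(r)|⁴ r² dr ≤ 4 ‖u'‖_{L²(R,∞)}^{3/2} · ‖r·u‖_{L²(R,∞)}^{5/2}. -/
open MeasureTheory Set

private lemma rpow_three_half {x : ℝ} (hx : 0 ≤ x) : x ^ ((3 : ℝ) / 2) = x * Real.sqrt x := by
  rcases hx.eq_or_lt with h | h
  · rw [← h]; rw [Real.zero_rpow (by norm_num), Real.sqrt_zero]; ring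
  · rw [show (3 : ℝ) / 2 = 1 + 1 / 2 by norm_num, Real.rpow_add h, Real.rpow_one,
      Real.sqrt_eq_rpow]

private lemma rpow_five_half {x : ℝ} (hx : 0 ≤ x) : x ^ ((5 : ℝ) / 2) = x ^ 2 * Real.sqrt x := by
  rcases hx.eq_or_lt with h | h
  · rw [← h]; rw [Real.zero_rpow (by norm_num), Real.sqrt_zero]; ring
  · rw [show (5 : ℝ) / 2 = 2 + 1 / 2 by norm_num, Real.rpow_add h, Real.rpow_two,
      Real.sqrt_eq_rpow]

/-- Cauchy–Schwarz on a set for continuous compactly supported functions. -/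
private lemma cs_aux_s4 {f g : ℝ → ℝ} (hf : Continuous f) (hg : Continuous g)
    (hfc : HasCompactSupport f) (hgc : HasCompactSupport g) (S : Set ℝ)
    (hf0 : ∀ᵐ x ∂(volume.restrict S), 0 ≤ f x) (hg0 : ∀ᵐ x ∂(volume.restrict S), 0 ≤ g x) :
    ∫ x in S, f x * g x ≤ Real.sqrt (∫ x in S, f x ^ 2) * Real.sqrt (∫ x in S, g x ^ 2) := by
  have hpq : Real.HolderConjugate 2 2 := ⟨by norm_num, by norm_num, by norm_num⟩
  have hfm : MemLp f (ENNReal.ofReal 2) (volume.restrict S) :=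
    (hf.memLp_of_hasCompactSupport hfc).restrict S
  have hgm : MemLp g (ENNReal.ofReal 2) (volume.restrict S) :=
    (hg.memLp_of_hasCompactSupport hgc).restrict S
  have h := integral_mul_le_Lp_mul_Lq_of_nonneg hpq hf0 hg0 hfm hgm
  simp only [Real.rpow_two] at h
  rw [← Real.sqrt_eq_rpow, ← Real.sqrt_eq_rpow] at h
  exact h

set_option maxHeartbeats 1000000 in
/-- For `u : ℝ → ℂ` continuously differentiable with compact support and `R ≥ 0`,
`∫_R^∞ |u(r)|⁴ r² dr ≤ 4 ‖u'‖_{L²(R,∞)}^{3/2} ‖r·u‖_{L²(R,∞)}^{5/2}`. -/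
theorem stmt4 (u : ℝ → ℂ) (hu : ContDiff ℝ 1 u) (hsupp : HasCompactSupport u)
    (R : ℝ) (hR : 0 ≤ R) :
    (∫ r in Set.Ioi R, ‖u r‖ ^ 4 * r ^ 2) ≤
      4 * Real.sqrt (∫ r in Set.Ioi R, ‖deriv u r‖ ^ 2) ^ ((3 : ℝ) / 2) *
        Real.sqrt (∫ r in Set.Ioi R, r ^ 2 * ‖u r‖ ^ 2) ^ ((5 : ℝ) / 2) := by
  have cu : Continuous u := hu.continuous
  have cu' : Continuous (deriv u) := hu.continuous_deriv le_rfl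
  have hsupp' : HasCompactSupport (deriv u) := hsupp.deriv
  -- various compact supports
  have csnu : HasCompactSupport (fun s : ℝ => ‖u s‖) :=
    hsupp.comp_left (g := fun z : ℂ => ‖z‖) norm_zero
  have csnu' : HasCompactSupport (fun s : ℝ => ‖deriv u s‖) :=
    hsupp'.comp_left (g := fun z : ℂ => ‖z‖) norm_zero
  have csq : HasCompactSupport (fun s : ℝ => ‖u s‖ ^ 2) :=
    hsupp.comp_left (g := fun z : ℂ => ‖z‖ ^ 2) (by simp)
  have csre : HasCompactSupport (fun s : ℝ => (u s).re) :=
    hsupp.comp_left (g := Complex.re) Complex.zero_re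
  have csim : HasCompactSupport (fun s : ℝ => (u s).im) :=
    hsupp.comp_left (g := Complex.im) Complex.zero_im
  -- the function D, the derivative of ‖u‖²
  set D : ℝ → ℝ := fun s => 2 * ((u s).re * (deriv u s).re + (u s).im * (deriv u s).im) with hD
  have cD : Continuous D := by
    apply Continuous.mul continuous_const
    exact ((Complex.continuous_re.comp cu).mul (Complex.continuous_re.comp cu')).add
      ((Complex.continuous_im.comp cu).mul (Complex.continuous_im.comp cu'))
  have csD : HasCompactSupport D := by
    have h1 : HasCompactSupport ((fun s : ℝ => (u s).re) * (fun s => (deriv u s).re)) :=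
      csre.mul_right
    have h2 : HasCompactSupport ((fun s : ℝ => (u s).im) * (fun s => (deriv u s).im)) :=
      csim.mul_right
    have := (h1.add h2).mul_left (f := fun _ : ℝ => (2:ℝ))
    exact this
  -- derivative of g t = t * ‖u t‖²
  have hnorm : ∀ z : ℂ, ‖z‖ ^ 2 = z.re ^ 2 + z.im ^ 2 := fun z => by
    rw [Complex.sq_norm, Complex.normSq_apply]; ring
  have hderivg : ∀ s : ℝ, HasDerivAt (fun t => t * ‖u t‖ ^ 2) (‖u s‖ ^ 2 + s * D s) s := by
    intro s
    have hdu : HasDerivAt u (deriv u s) s :=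
      ((hu.differentiable one_ne_zero) s).hasDerivAt
    have hre : HasDerivAt (fun t => (u t).re) ((deriv u s).re) s :=
      (Complex.reCLM.hasFDerivAt.comp_hasDerivAt s hdu)
    have him : HasDerivAt (fun t => (u t).im) ((deriv u s).im) s :=
      (Complex.imCLM.hasFDerivAt.comp_hasDerivAt s hdu)
    have hN : HasDerivAt (fun t => (u t).re ^ 2 + (u t).im ^ 2) (D s) s := by
      have h := (hre.fun_pow 2).fun_add (him.fun_pow 2)
      refine h.congr_deriv ?_
      show _ = D s
      simp only [hD]; push_cast; ring
    have hg : HasDerivAt (fun t => t * ((u t).re ^ 2 + (u t).im ^ 2))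
        (1 * ((u s).re ^ 2 + (u s).im ^ 2) + s * D s) s := (hasDerivAt_id s).mul hN
    have hfe : (fun t => t * ‖u t‖ ^ 2) = fun t => t * ((u t).re ^ 2 + (u t).im ^ 2) := by
      funext t; rw [hnorm]
    rw [hfe, hnorm]
    simpa using hg
  -- pointwise bound on D
  have hDle : ∀ s : ℝ, |D s| ≤ 2 * (‖u s‖ * ‖deriv u s‖) := by
    intro s
    have h1 : (u s).re * (deriv u s).re + (u s).im * (deriv u s).im
        = ((starRingEnd ℂ) (u s) * deriv u s).re := by
      simp [Complex.mul_re]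
    have h2 : |((starRingEnd ℂ) (u s) * deriv u s).re|
        ≤ ‖(starRingEnd ℂ) (u s) * deriv u s‖ := by
      exact Complex.abs_re_le_norm _
    have h3 : ‖(starRingEnd ℂ) (u s) * deriv u s‖ = ‖u s‖ * ‖deriv u s‖ := by
      rw [norm_mul, RCLike.norm_conj]
    calc |D s| = 2 * |((starRingEnd ℂ) (u s) * deriv u s).re| := by
          rw [hD]; rw [abs_mul, h1]; simp
      _ ≤ 2 * (‖u s‖ * ‖deriv u s‖) := by rw [← h3]; linarith
  -- tendsto 0 at top
  have hev : (fun t : ℝ => t * ‖u t‖ ^ 2) =ᶠ[Filter.atTop] fun _ => (0 : ℝ) := by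
    obtain ⟨C, hC⟩ := isBounded_iff_forall_norm_le.mp hsupp.isBounded
    filter_upwards [Filter.eventually_gt_atTop C] with t ht
    have : t ∉ tsupport u := by
      intro h
      have := hC t h
      rw [Real.norm_eq_abs] at this
      have : t ≤ C := (le_abs_self t).trans this
      linarith
    rw [image_eq_zero_of_notMem_tsupport this]
    simp
  have hT : Filter.Tendsto (fun t : ℝ => t * ‖u t‖ ^ 2) Filter.atTop (nhds 0) :=
    Filter.Tendsto.congr' hev.symm tendsto_const_nhds
  -- integrability
  have int_aux : ∀ (f : ℝ → ℝ), Continuous f → HasCompactSupport f →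
      ∀ S : Set ℝ, IntegrableOn f S := fun f hf hcs S =>
    (hf.integrable_of_hasCompactSupport hcs).integrableOn
  have intq : ∀ S : Set ℝ, IntegrableOn (fun s => ‖u s‖ ^ 2) S :=
    int_aux _ (cu.norm.pow 2) csq
  have intsD : ∀ S : Set ℝ, IntegrableOn (fun s => s * D s) S :=
    int_aux _ (continuous_id.mul cD) (csD.mul_left)
  have intI : ∀ S : Set ℝ, IntegrableOn (fun s => s * (‖u s‖ * ‖deriv u s‖)) S :=
    int_aux _ (continuous_id.mul (cu.norm.mul cu'.norm)) ((csnu.mul_right).mul_left)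
  have intf6 : ∀ S : Set ℝ, IntegrableOn (fun s => s * ‖u s‖ ^ 2) S :=
    int_aux _ (continuous_id.mul (cu.norm.pow 2)) (csq.mul_left)
  have intf1 : ∀ S : Set ℝ, IntegrableOn (fun s => ‖u s‖ ^ 4 * s ^ 2) S :=
    int_aux _ ((cu.norm.pow 4).mul (continuous_id.pow 2))
      ((hsupp.comp_left (g := fun z : ℂ => ‖z‖ ^ 4) (by simp)).mul_right)
  -- the key quantity I
  set I : ℝ := ∫ s in Ioi R, s * (‖u s‖ * ‖deriv u s‖) with hIdef
  have hInonneg : 0 ≤ I := by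
    apply setIntegral_nonneg measurableSet_Ioi
    intro s hs
    have hs0 : 0 ≤ s := hR.trans (le_of_lt hs)
    positivity
  -- FTC
  have hFTC : ∀ r, R ≤ r →
      r * ‖u r‖ ^ 2 = -∫ s in Ioi r, (‖u s‖ ^ 2 + s * D s) := by
    intro r _
    have h := integral_Ioi_of_hasDerivAt_of_tendsto (a := r)
      (f := fun t => t * ‖u t‖ ^ 2) (f' := fun s => ‖u s‖ ^ 2 + s * D s)
      ((continuous_id.mul (cu.norm.pow 2)).continuousWithinAt)
      (fun x _ => hderivg x)
      ((intq (Ioi r)).add (intsD (Ioi r))) hT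
    rw [h]; ring
  -- bound -∫ sD ≤ 2I on any Ioi r, r ≥ R
  have hsDbound : ∀ r, R ≤ r → -(∫ s in Ioi r, s * D s) ≤ 2 * I := by
    intro r hr
    have h1 : -(∫ s in Ioi r, s * D s) ≤ |∫ s in Ioi r, s * D s| := neg_le_abs _
    have h2 : |∫ s in Ioi r, s * D s| ≤ ∫ s in Ioi r, |s| * |D s| := by
      have := norm_integral_le_integral_norm (μ := volume.restrict (Ioi r))
        (f := fun s => s * D s)
      simpa [Real.norm_eq_abs, abs_mul] using this
    have h3 : ∫ s in Ioi r, |s| * |D s| ≤ ∫ s in Ioi r, 2 * (s * (‖u s‖ * ‖deriv u s‖)) := by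
      apply setIntegral_mono_on (((intsD (Ioi r)).abs).congr
        (Filter.Eventually.of_forall fun s => abs_mul s (D s)))
        ((intI (Ioi r)).const_mul 2) measurableSet_Ioi
      intro s hs
      have hs0 : 0 ≤ s := hR.trans (hr.trans (le_of_lt hs))
      rw [abs_of_nonneg hs0]
      calc s * |D s| ≤ s * (2 * (‖u s‖ * ‖deriv u s‖)) :=
            mul_le_mul_of_nonneg_left (hDle s) hs0
        _ = 2 * (s * (‖u s‖ * ‖deriv u s‖)) := by ring
    have h4 : ∫ s in Ioi r, 2 * (s * (‖u s‖ * ‖deriv u s‖))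
        ≤ ∫ s in Ioi R, 2 * (s * (‖u s‖ * ‖deriv u s‖)) := by
      apply setIntegral_mono_set ((intI (Ioi R)).const_mul 2)
      · filter_upwards [ae_restrict_mem measurableSet_Ioi] with s hs
        have hs0 : 0 ≤ s := hR.trans (le_of_lt hs)
        positivity
      · exact HasSubset.Subset.eventuallyLE (Ioi_subset_Ioi hr)
    have h5 : ∫ s in Ioi R, 2 * (s * (‖u s‖ * ‖deriv u s‖)) = 2 * I := by
      rw [hIdef, integral_const_mul]
    linarith
  -- (a) pointwise sup bound
  have ha : ∀ r, R ≤ r → r * ‖u r‖ ^ 2 ≤ 2 * I := by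
    intro r hr
    rw [hFTC r hr]
    rw [integral_add (intq (Ioi r)) (intsD (Ioi r))]
    have h1 : 0 ≤ ∫ s in Ioi r, ‖u s‖ ^ 2 :=
      setIntegral_nonneg measurableSet_Ioi fun s _ => by positivity
    have h2 := hsDbound r hr
    linarith
  -- (b) L² bound on u
  have hb : ∫ s in Ioi R, ‖u s‖ ^ 2 ≤ 2 * I := by
    have h := hFTC R le_rfl
    rw [integral_add (intq (Ioi R)) (intsD (Ioi R))] at h
    have h2 := hsDbound R le_rfl
    have h3 : 0 ≤ R * ‖u R‖ ^ 2 := by positivity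
    linarith
  -- abbreviations
  set X : ℝ := ∫ r in Ioi R, ‖deriv u r‖ ^ 2 with hXdef
  set Y : ℝ := ∫ r in Ioi R, r ^ 2 * ‖u r‖ ^ 2 with hYdef
  set A : ℝ := Real.sqrt Y with hAdef
  set B : ℝ := Real.sqrt X with hBdef
  have hA0 : 0 ≤ A := Real.sqrt_nonneg _
  have hB0 : 0 ≤ B := Real.sqrt_nonneg _
  -- (c) Cauchy-Schwarz: I ≤ A * B
  have hc : I ≤ A * B := by
    have h := cs_aux_s4 (f := fun s => s * ‖u s‖) (g := fun s => ‖deriv u s‖)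
      (continuous_id.mul cu.norm) cu'.norm (csnu.mul_left) csnu' (Ioi R)
      (by filter_upwards [ae_restrict_mem measurableSet_Ioi] with s hs
          have : 0 ≤ s := hR.trans (le_of_lt hs); positivity)
      (Filter.Eventually.of_forall fun s => norm_nonneg _)
    simp_rw [mul_pow, mul_assoc] at h
    exact h
  -- (d) ∫ s‖u‖² ≤ A * sqrt(∫‖u‖²)
  have hd : ∫ s in Ioi R, s * ‖u s‖ ^ 2
      ≤ A * Real.sqrt (∫ s in Ioi R, ‖u s‖ ^ 2) := by
    have h := cs_aux_s4 (f := fun s => s * ‖u s‖) (g := fun s => ‖u s‖)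
      (continuous_id.mul cu.norm) cu.norm (csnu.mul_left) csnu (Ioi R)
      (by filter_upwards [ae_restrict_mem measurableSet_Ioi] with s hs
          have : 0 ≤ s := hR.trans (le_of_lt hs); positivity)
      (Filter.Eventually.of_forall fun s => norm_nonneg _)
    simp_rw [mul_pow, mul_assoc, ← pow_two] at h
    exact h
  -- (e) main integral bound
  have he : (∫ r in Ioi R, ‖u r‖ ^ 4 * r ^ 2)
      ≤ 2 * I * ∫ s in Ioi R, s * ‖u s‖ ^ 2 := by
    have h1 : (∫ r in Ioi R, ‖u r‖ ^ 4 * r ^ 2)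
        ≤ ∫ r in Ioi R, 2 * I * (r * ‖u r‖ ^ 2) := by
      apply setIntegral_mono_on (intf1 (Ioi R))
        ((intf6 (Ioi R)).const_mul (2 * I)) measurableSet_Ioi
      intro r hr
      have hr0 : 0 ≤ r := hR.trans (le_of_lt hr)
      have h := ha r (le_of_lt hr)
      have hnn : 0 ≤ r * ‖u r‖ ^ 2 := by positivity
      calc ‖u r‖ ^ 4 * r ^ 2 = (r * ‖u r‖ ^ 2) * (r * ‖u r‖ ^ 2) := by ring
        _ ≤ 2 * I * (r * ‖u r‖ ^ 2) := mul_le_mul_of_nonneg_right h hnn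
    rw [integral_const_mul] at h1
    exact h1
  -- numeric conclusion
  have hQ0 : 0 ≤ ∫ s in Ioi R, ‖u s‖ ^ 2 :=
    setIntegral_nonneg measurableSet_Ioi fun s _ => by positivity
  have hF0 : 0 ≤ ∫ s in Ioi R, s * ‖u s‖ ^ 2 :=
    setIntegral_nonneg measurableSet_Ioi fun s hs => by
      have : 0 ≤ s := hR.trans (le_of_lt hs); positivity
  have hsqQ : Real.sqrt (∫ s in Ioi R, ‖u s‖ ^ 2) ≤ Real.sqrt (2 * I) :=
    Real.sqrt_le_sqrt hb
  have step1 : (∫ r in Ioi R, ‖u r‖ ^ 4 * r ^ 2) ≤ 2 * I * (A * Real.sqrt (2 * I)) := by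
    have h2 : ∫ s in Ioi R, s * ‖u s‖ ^ 2 ≤ A * Real.sqrt (2 * I) :=
      hd.trans (mul_le_mul_of_nonneg_left hsqQ hA0)
    calc (∫ r in Ioi R, ‖u r‖ ^ 4 * r ^ 2) ≤ 2 * I * ∫ s in Ioi R, s * ‖u s‖ ^ 2 := he
      _ ≤ 2 * I * (A * Real.sqrt (2 * I)) :=
          mul_le_mul_of_nonneg_left h2 (by linarith)
  have step2 : 2 * I * (A * Real.sqrt (2 * I)) ≤ 2 * (A * B) * (A * Real.sqrt (2 * (A * B))) := by
    have hsq : Real.sqrt (2 * I) ≤ Real.sqrt (2 * (A * B)) :=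
      Real.sqrt_le_sqrt (by linarith)
    have h1 : I * Real.sqrt (2 * I) ≤ (A * B) * Real.sqrt (2 * (A * B)) :=
      mul_le_mul hc hsq (Real.sqrt_nonneg _) (mul_nonneg hA0 hB0)
    calc 2 * I * (A * Real.sqrt (2 * I)) = 2 * A * (I * Real.sqrt (2 * I)) := by ring
      _ ≤ 2 * A * ((A * B) * Real.sqrt (2 * (A * B))) :=
          mul_le_mul_of_nonneg_left h1 (by linarith)
      _ = 2 * (A * B) * (A * Real.sqrt (2 * (A * B))) := by ring
  have step3 : 2 * (A * B) * (A * Real.sqrt (2 * (A * B))) ≤ 4 * B ^ ((3:ℝ)/2) * A ^ ((5:ℝ)/2) := by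
    rw [rpow_three_half hB0, rpow_five_half hA0]
    rw [Real.sqrt_mul (by norm_num : (0:ℝ) ≤ 2), Real.sqrt_mul hA0]
    have h2 : Real.sqrt 2 ≤ 2 := by
      nlinarith [Real.sq_sqrt (show (0:ℝ) ≤ 2 by norm_num), Real.sqrt_nonneg 2]
    have hsA : 0 ≤ Real.sqrt A := Real.sqrt_nonneg _
    have hsB : 0 ≤ Real.sqrt B := Real.sqrt_nonneg _
    have key : 2 * Real.sqrt 2 ≤ 4 := by linarith
    calc 2 * (A * B) * (A * (Real.sqrt 2 * (Real.sqrt A * Real.sqrt B)))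
        = (2 * Real.sqrt 2) * (A ^ 2 * B * Real.sqrt A * Real.sqrt B) := by ring
      _ ≤ 4 * (A ^ 2 * B * Real.sqrt A * Real.sqrt B) := by
          exact mul_le_mul_of_nonneg_right key
            (mul_nonneg (mul_nonneg (mul_nonneg (sq_nonneg A) hB0) hsA) hsB)
      _ = 4 * (B * Real.sqrt B) * (A ^ 2 * Real.sqrt A) := by ring
  linarith
end

section
/- Let u : ℝ → ℂ be continuously differentiable with compact support. Then for every R ≥ 0, ∫_R^∞ |u(r)|⁴ r dr ≤ 4√2 · (∫_R^∞ |u'(r)|² dr) · (∫_R^∞ |u(r)|² r² dr). -/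
open MeasureTheory Set

/-- For `u : ℝ → ℂ` continuously differentiable with compact support and `R ≥ 0`,
`∫_R^∞ |u(r)|⁴ r dr ≤ 4√2 (∫_R^∞ |u'(r)|² dr)(∫_R^∞ |u(r)|² r² dr)`. -/
theorem stmt5 (u : ℝ → ℂ) (hu : ContDiff ℝ 1 u) (hsupp : HasCompactSupport u)
    (R : ℝ) (hR : 0 ≤ R) :
    (∫ r in Set.Ioi R, ‖u r‖ ^ 4 * r) ≤
      4 * Real.sqrt 2 * (∫ r in Set.Ioi R, ‖deriv u r‖ ^ 2) *
        (∫ r in Set.Ioi R, ‖u r‖ ^ 2 * r ^ 2) := by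
  have hc : Continuous u := hu.continuous
  set v : ℝ → ℂ := deriv u with hv
  have hc' : Continuous v := hu.continuous_deriv le_rfl
  have hvs : HasCompactSupport v := hsupp.deriv
  have hd : ∀ x : ℝ, HasDerivAt u (v x) x :=
    fun x => (hu.differentiable one_ne_zero x).hasDerivAt
  set A := ∫ r in Ioi R, ‖v r‖ ^ 2 with hA
  set B := ∫ r in Ioi R, ‖u r‖ ^ 2 * r ^ 2 with hB
  -- compact support helper
  have hmono : ∀ h : ℝ → ℝ, (∀ s, u s = 0 → h s = 0) → HasCompactSupport h := by
    intro h hh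
    apply hsupp.mono
    intro x hx
    simp only [Function.mem_support] at hx ⊢
    exact fun h0 => hx (hh x h0)
  have hmono' : ∀ h : ℝ → ℝ, (∀ s, v s = 0 → h s = 0) → HasCompactSupport h := by
    intro h hh
    apply hvs.mono
    intro x hx
    simp only [Function.mem_support] at hx ⊢
    exact fun h0 => hx (hh x h0)
  have hint : ∀ h : ℝ → ℝ, Continuous h → HasCompactSupport h →
      ∀ r : ℝ, IntegrableOn h (Ioi r) :=
    fun h hch hcs r => (hch.integrable_of_hasCompactSupport hcs).integrableOn
  -- the inner product function
  have hcip : Continuous fun s => (inner ℝ (u s) (v s) : ℝ) := hc.inner hc'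
  -- g and its derivative
  set g : ℝ → ℝ := fun s => ‖u s‖ ^ 2 * s with hgdef
  set g' : ℝ → ℝ := fun s => 2 * (inner ℝ (u s) (v s) : ℝ) * s + ‖u s‖ ^ 2 * 1 with hg'def
  have hg : ∀ x : ℝ, HasDerivAt g (g' x) x := by
    intro x
    exact ((hd x).norm_sq).mul (hasDerivAt_id x)
  have hcg : Continuous g := ((hc.norm.pow 2).mul continuous_id)
  have hcg' : Continuous g' := by
    apply Continuous.add ((continuous_const.mul hcip).mul continuous_id)
    exact (hc.norm.pow 2).mul continuous_const
  have hgcs : HasCompactSupport g := by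
    apply hmono
    intro s h0
    simp [hgdef, h0]
  have hg'cs : HasCompactSupport g' := by
    apply hmono
    intro s h0
    simp [hg'def, h0]
  have hgtop : Filter.Tendsto g Filter.atTop (nhds 0) := by
    have h := hgcs
    rw [hasCompactSupport_iff_eventuallyEq, Filter.coclosedCompact_eq_cocompact] at h
    exact (h.filter_mono _root_.atTop_le_cocompact).tendsto
  have hFTC : ∀ r : ℝ, (∫ s in Ioi r, g' s) = -g r := by
    intro r
    rw [integral_Ioi_of_hasDerivAt_of_tendsto hcg.continuousWithinAt
      (fun x _ => hg x) (hint g' hcg' hg'cs r) hgtop, zero_sub]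
  -- nonnegativity of A, B
  have hAnn : 0 ≤ A := setIntegral_nonneg measurableSet_Ioi fun x _ => sq_nonneg _
  have hBnn : 0 ≤ B := setIntegral_nonneg measurableSet_Ioi fun x _ =>
    mul_nonneg (sq_nonneg _) (sq_nonneg _)
  set M := Real.sqrt A * Real.sqrt B with hM
  have hMnn : 0 ≤ M := mul_nonneg (Real.sqrt_nonneg _) (Real.sqrt_nonneg _)
  -- the key product integrand
  set q : ℝ → ℝ := fun s => ‖u s‖ * ‖v s‖ * s with hqdef
  have hcq : Continuous q := (hc.norm.mul hc'.norm).mul continuous_id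
  have hqcs : HasCompactSupport q := by
    apply hmono
    intro s h0
    simp [hqdef, h0]
  have hqnonneg : ∀ s ∈ Ioi R, 0 ≤ q s := by
    intro s hs
    exact mul_nonneg (mul_nonneg (norm_nonneg _) (norm_nonneg _))
      (hR.trans (le_of_lt hs))
  -- Cauchy-Schwarz
  have hCS : (∫ s in Ioi R, q s) ≤ M := by
    have h1 : (∫ s in Ioi R, q s) = ∫ s in Ioi R, ‖v s‖ * (‖u s‖ * s) := by
      apply integral_congr_ae
      filter_upwards with s
      simp only [hqdef]; ring
    rw [h1]
    have hconj : Real.HolderConjugate 2 2 := ⟨by norm_num, by norm_num, by norm_num⟩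
    have hf1 : MemLp (fun s => ‖v s‖) (ENNReal.ofReal 2) (volume.restrict (Ioi R)) :=
      (hc'.norm.memLp_of_hasCompactSupport (p := ENNReal.ofReal 2) hvs.norm).restrict _
    have hg1 : MemLp (fun s => ‖u s‖ * s) (ENNReal.ofReal 2) (volume.restrict (Ioi R)) := by
      refine (Continuous.memLp_of_hasCompactSupport (hc.norm.mul continuous_id) ?_).restrict _
      apply hmono
      intro s h0
      simp [h0]
    have hnn1 : 0 ≤ᵐ[volume.restrict (Ioi R)] fun s => ‖v s‖ :=
      Filter.Eventually.of_forall fun s => norm_nonneg _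
    have hnn2 : 0 ≤ᵐ[volume.restrict (Ioi R)] fun s => ‖u s‖ * s := by
      rw [Filter.EventuallyLE, ae_restrict_iff' measurableSet_Ioi]
      filter_upwards with s hs
      exact mul_nonneg (norm_nonneg _) (hR.trans (le_of_lt hs))
    have := integral_mul_le_Lp_mul_Lq_of_nonneg hconj hnn1 hnn2 hf1 hg1
    refine le_trans this ?_
    have e2 : ∀ x : ℝ, x ^ (2 : ℝ) = x ^ 2 := by
      intro x
      rw [show (2 : ℝ) = ((2 : ℕ) : ℝ) by norm_num, Real.rpow_natCast]
    have eA : (∫ s in Ioi R, ‖v s‖ ^ (2 : ℝ)) = A := by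
      rw [hA]; apply integral_congr_ae
      filter_upwards with s
      exact e2 _
    have eB : (∫ s in Ioi R, (‖u s‖ * s) ^ (2 : ℝ)) = B := by
      rw [hB]; apply integral_congr_ae
      filter_upwards with s
      rw [e2]; ring
    rw [eA, eB, hM, ← Real.sqrt_eq_rpow, ← Real.sqrt_eq_rpow]
  have hCSr : ∀ r, R ≤ r → (∫ s in Ioi r, q s) ≤ M := by
    intro r hr
    refine le_trans (setIntegral_mono_set (hint q hcq hqcs R) ?_ ?_) hCS
    · rw [Filter.EventuallyLE, ae_restrict_iff' measurableSet_Ioi]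
      filter_upwards with s hs
      exact hqnonneg s hs
    · exact (Ioi_subset_Ioi hr).eventuallyLE
  -- pointwise bound for g
  have hsup : ∀ r, R ≤ r → g r ≤ 2 * M := by
    intro r hr
    have h1 : g r = ∫ s in Ioi r, -g' s := by
      rw [integral_neg, hFTC r, neg_neg]
    have h2 : (∫ s in Ioi r, -g' s) ≤ ∫ s in Ioi r, 2 * q s := by
      refine setIntegral_mono_on ((hint g' hcg' hg'cs r).neg)
        ((hint q hcq hqcs r).const_mul 2) measurableSet_Ioi ?_
      intro s hs
      have hs0 : (0 : ℝ) ≤ s := hR.trans (hr.trans (le_of_lt hs))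
      have hip : -(inner ℝ (u s) (v s) : ℝ) ≤ ‖u s‖ * ‖v s‖ := by
        have h := abs_real_inner_le_norm (u s) (v s)
        have h' := neg_abs_le (inner ℝ (u s) (v s) : ℝ)
        linarith
      have hnsq : 0 ≤ ‖u s‖ ^ 2 := sq_nonneg _
      have := mul_le_mul_of_nonneg_right hip hs0
      simp only [hg'def, hqdef]
      nlinarith
    have h3 : (∫ s in Ioi r, 2 * q s) = 2 * ∫ s in Ioi r, q s := by
      exact integral_const_mul 2 q
    have h4 := hCSr r hr
    rw [h1]
    rw [h3] at h2
    linarith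
  -- bound on ∫ ‖u‖²
  have hintu2 : IntegrableOn (fun s => ‖u s‖ ^ 2) (Ioi R) := by
    refine hint _ (hc.norm.pow 2) ?_ R
    apply hmono
    intro s h0
    simp [h0]
  have hintip : IntegrableOn (fun s => 2 * (inner ℝ (u s) (v s) : ℝ) * s) (Ioi R) := by
    refine hint _ ((continuous_const.mul hcip).mul continuous_id) ?_ R
    apply hmono
    intro s h0
    simp [h0]
  have hL2 : (∫ s in Ioi R, ‖u s‖ ^ 2) ≤ 2 * M := by
    have h0 : (∫ s in Ioi R, g' s) = -g R := hFTC R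
    have hsplit : (∫ s in Ioi R, g' s)
        = (∫ s in Ioi R, 2 * (inner ℝ (u s) (v s) : ℝ) * s) + ∫ s in Ioi R, ‖u s‖ ^ 2 * 1 := by
      exact integral_add hintip (by simpa [IntegrableOn] using hintu2)
    have hgR : 0 ≤ g R := mul_nonneg (sq_nonneg _) hR
    have hterm : (∫ s in Ioi R, -(2 * (inner ℝ (u s) (v s) : ℝ) * s)) ≤ ∫ s in Ioi R, 2 * q s := by
      refine setIntegral_mono_on hintip.neg ((hint q hcq hqcs R).const_mul 2)
        measurableSet_Ioi ?_
      intro s hs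
      have hs0 : (0 : ℝ) ≤ s := hR.trans (le_of_lt hs)
      have hip : -(inner ℝ (u s) (v s) : ℝ) ≤ ‖u s‖ * ‖v s‖ := by
        have h := abs_real_inner_le_norm (u s) (v s)
        have h' := neg_abs_le (inner ℝ (u s) (v s) : ℝ)
        linarith
      have := mul_le_mul_of_nonneg_right hip hs0
      simp only [hqdef]
      nlinarith
    rw [integral_neg] at hterm
    have h3 : (∫ s in Ioi R, 2 * q s) = 2 * ∫ s in Ioi R, q s := integral_const_mul 2 q
    have hone : (∫ s in Ioi R, ‖u s‖ ^ 2 * 1) = ∫ s in Ioi R, ‖u s‖ ^ 2 := by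
      simp
    rw [hsplit, hone] at h0
    rw [h3] at hterm
    have := hCS
    linarith
  -- final assembly
  have hint4 : IntegrableOn (fun s => ‖u s‖ ^ 4 * s) (Ioi R) := by
    refine hint _ ((hc.norm.pow 4).mul continuous_id) ?_ R
    apply hmono
    intro s h0
    simp [h0]
  have hstep : (∫ r in Ioi R, ‖u r‖ ^ 4 * r) ≤ ∫ r in Ioi R, ‖u r‖ ^ 2 * (2 * M) := by
    refine setIntegral_mono_on hint4 (hintu2.mul_const _) measurableSet_Ioi ?_
    intro s hs
    have h4 : ‖u s‖ ^ 4 * s = ‖u s‖ ^ 2 * (‖u s‖ ^ 2 * s) := by ring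
    rw [h4]
    exact mul_le_mul_of_nonneg_left (hsup s (le_of_lt hs)) (sq_nonneg _)
  have hstep2 : (∫ r in Ioi R, ‖u r‖ ^ 2 * (2 * M)) = (∫ r in Ioi R, ‖u r‖ ^ 2) * (2 * M) :=
    integral_mul_const _ _
  have hABM : M ^ 2 = A * B := by
    rw [hM, mul_pow, Real.sq_sqrt hAnn, Real.sq_sqrt hBnn]
  have hsqrt2 : Real.sqrt 2 * Real.sqrt 2 = 2 := Real.mul_self_sqrt (by norm_num)
  have hs2nn : (0 : ℝ) ≤ Real.sqrt 2 := Real.sqrt_nonneg 2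
  have hmain : (∫ r in Ioi R, ‖u r‖ ^ 4 * r) ≤ 4 * (A * B) := by
    calc (∫ r in Ioi R, ‖u r‖ ^ 4 * r)
        ≤ (∫ r in Ioi R, ‖u r‖ ^ 2) * (2 * M) := by rw [← hstep2]; exact hstep
      _ ≤ (2 * M) * (2 * M) := by
          apply mul_le_mul_of_nonneg_right hL2
          linarith
      _ = 4 * M ^ 2 := by ring
      _ = 4 * (A * B) := by rw [hABM]
  have hAB : 0 ≤ A * B := mul_nonneg hAnn hBnn
  calc (∫ r in Ioi R, ‖u r‖ ^ 4 * r) ≤ 4 * (A * B) := hmain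
    _ ≤ 4 * Real.sqrt 2 * A * B := by nlinarith
end

section
/- Let u : ℝ → ℂ be continuously differentiable with compact support. Then for every R > 0, sup_{r > R} |u(r)|² ≤ 2 R^{-2} ‖r·u'‖_{L²(R,∞)} · ‖r·u‖_{L²(R,∞)}. -/
open MeasureTheory Set

/-- For `u : ℝ → ℂ` continuously differentiable with compact support and `R > 0`,
`sup_{r > R} |u(r)|² ≤ 2 R^{-2} ‖r·u'‖_{L²(R,∞)} ‖r·u‖_{L²(R,∞)}`. -/
theorem stmt6 (u : ℝ → ℂ) (hu : ContDiff ℝ 1 u) (hsupp : HasCompactSupport u)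
    (R : ℝ) (hR : 0 < R) :
    ∀ r ∈ Set.Ioi R, ‖u r‖ ^ 2 ≤
      2 / R ^ 2 * Real.sqrt (∫ r in Set.Ioi R, r ^ 2 * ‖deriv u r‖ ^ 2) *
        Real.sqrt (∫ r in Set.Ioi R, r ^ 2 * ‖u r‖ ^ 2) := by
  intro r hr
  simp only [Set.mem_Ioi] at hr
  set v := deriv u with hv
  have hucont : Continuous u := hu.continuous
  have hvcont : Continuous v := hu.continuous_deriv le_rfl
  have hvsupp : HasCompactSupport v := hsupp.deriv
  -- choose M beyond the support
  obtain ⟨M0, hM0⟩ := hsupp.isCompact.isBounded.subset_closedBall 0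
  set M : ℝ := max M0 r + 1 with hM
  have hrM : r ≤ M := le_trans (le_max_right _ _) (by linarith [le_max_right M0 r])
  have huM : u M = 0 := by
    apply image_eq_zero_of_notMem_tsupport
    intro hmem
    have := hM0 hmem
    simp only [Metric.mem_closedBall, Real.dist_eq, sub_zero] at this
    have h1 : M0 ≤ max M0 r := le_max_left _ _
    have h2 : |M| ≤ M0 := this
    have h3 : M ≤ |M| := le_abs_self M
    linarith
  -- derivative of the squared norm
  set g' : ℝ → ℝ := fun t => 2 * (u t * (starRingEnd ℂ) (v t)).re with hg'
  have hg : ∀ t : ℝ, HasDerivAt (fun s => ‖u s‖ ^ 2) (g' t) t := by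
    intro t
    have h1 : HasDerivAt u (v t) t := (hu.differentiable one_ne_zero t).hasDerivAt
    have h2 : HasDerivAt (fun s => (starRingEnd ℂ) (u s)) ((starRingEnd ℂ) (v t)) t :=
      Complex.conjCLE.toContinuousLinearMap.hasFDerivAt.comp_hasDerivAt t h1
    have h3 := h1.mul h2
    have h4 : HasDerivAt (fun s => (u s * (starRingEnd ℂ) (u s)).re)
        ((v t * (starRingEnd ℂ) (u t) + u t * (starRingEnd ℂ) (v t)).re) t :=
      Complex.reCLM.hasFDerivAt.comp_hasDerivAt t h3
    have heq : (fun s => (u s * (starRingEnd ℂ) (u s)).re) = fun s => ‖u s‖ ^ 2 := by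
      funext s
      rw [Complex.mul_conj, Complex.ofReal_re, Complex.normSq_eq_norm_sq]
    rw [heq] at h4
    convert h4 using 1
    simp only [hg', Complex.add_re, Complex.mul_re, Complex.conj_re, Complex.conj_im]
    ring
  have hg'cont : Continuous g' :=
    continuous_const.mul (Complex.continuous_re.comp
      (hucont.mul (Complex.continuous_conj.comp hvcont)))
  -- FTC
  have hftc : ∫ t in r..M, g' t = ‖u M‖ ^ 2 - ‖u r‖ ^ 2 :=
    intervalIntegral.integral_eq_sub_of_hasDerivAt (fun t _ => hg t)
      (hg'cont.intervalIntegrable r M)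
  rw [huM] at hftc
  simp only [norm_zero, ne_eq, OfNat.ofNat_ne_zero, not_false_eq_true, zero_pow, zero_sub] at hftc
  have key1 : ‖u r‖ ^ 2 = ∫ t in r..M, -g' t := by
    rw [intervalIntegral.integral_neg, hftc, neg_neg]
  -- the integrand bound
  set F : ℝ → ℝ := fun t => 2 * ‖u t‖ * ‖v t‖ with hF
  have hFcont : Continuous F := (continuous_const.mul hucont.norm).mul hvcont.norm
  have hFsupp : HasCompactSupport F := by
    apply hsupp.mono
    intro x hx hu0
    exact hx (by simp [hF, hu0])
  have hFnonneg : ∀ t, 0 ≤ F t := fun t => by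
    have := norm_nonneg (u t); have := norm_nonneg (v t); positivity
  have hbound : ∀ t, -g' t ≤ F t := by
    intro t
    have h1 : |(u t * (starRingEnd ℂ) (v t)).re| ≤ ‖u t‖ * ‖v t‖ := by
      calc |(u t * (starRingEnd ℂ) (v t)).re| ≤ ‖u t * (starRingEnd ℂ) (v t)‖ :=
            Complex.abs_re_le_norm _
        _ = ‖u t‖ * ‖v t‖ := by
            rw [norm_mul]
            simp
    have := neg_abs_le ((u t * (starRingEnd ℂ) (v t)).re)
    simp only [hg', hF]
    nlinarith [abs_nonneg ((u t * (starRingEnd ℂ) (v t)).re)]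
  have hFint : IntegrableOn F (Set.Ioi R) :=
    (hFcont.integrable_of_hasCompactSupport hFsupp).integrableOn
  -- step 1 : ‖u r‖² ≤ ∫_{Ioi R} F
  have step1 : ‖u r‖ ^ 2 ≤ ∫ t in Set.Ioi R, F t := by
    rw [key1]
    calc ∫ t in r..M, -g' t ≤ ∫ t in r..M, F t := by
          apply intervalIntegral.integral_mono_on hrM
          · exact ((hg'cont.neg).intervalIntegrable r M)
          · exact hFcont.intervalIntegrable r M
          · exact fun t _ => hbound t
      _ = ∫ t in Set.Ioc r M, F t := intervalIntegral.integral_of_le hrM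
      _ ≤ ∫ t in Set.Ioi R, F t := by
          apply setIntegral_mono_set hFint
          · exact Filter.Eventually.of_forall fun t => hFnonneg t
          · apply Filter.Eventually.of_forall
            intro t ht
            exact lt_of_lt_of_le hr (le_of_lt ht.1)
  -- step 2 : pointwise weight
  set G : ℝ → ℝ := fun t => (t * ‖v t‖) * (t * ‖u t‖) with hG
  have hGcont : Continuous G :=
    (continuous_id.mul hvcont.norm).mul (continuous_id.mul hucont.norm)
  have hGsupp : HasCompactSupport G := by
    apply hvsupp.mono
    intro x hx hv0
    exact hx (by simp [hG, hv0])
  have hGint : IntegrableOn G (Set.Ioi R) :=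
    (hGcont.integrable_of_hasCompactSupport hGsupp).integrableOn
  have step2 : ∫ t in Set.Ioi R, F t ≤ 2 / R ^ 2 * ∫ t in Set.Ioi R, G t := by
    rw [← integral_const_mul]
    apply setIntegral_mono_on hFint (hGint.const_mul _) measurableSet_Ioi
    intro t ht
    simp only [Set.mem_Ioi] at ht
    have htR : R < t := ht
    have ht0 : 0 < t := lt_trans hR htR
    have hR2 : 0 < R ^ 2 := by positivity
    simp only [hF, hG]
    rw [div_mul_eq_mul_div, le_div_iff₀ hR2]
    nlinarith [mul_nonneg (norm_nonneg (u t)) (norm_nonneg (v t)),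
      pow_le_pow_left₀ hR.le htR.le 2]
  -- step 3 : Cauchy–Schwarz
  have h22 : (2 : ℝ).HolderConjugate 2 := Real.HolderConjugate.two_two
  have hmem1 : MemLp (fun t => t * ‖v t‖) (ENNReal.ofReal 2) (volume.restrict (Set.Ioi R)) := by
    have : ENNReal.ofReal 2 = 2 := by norm_num
    rw [this]
    exact ((continuous_id.mul hvcont.norm).memLp_of_hasCompactSupport (μ := volume)
      (by apply hvsupp.mono; intro x hx hv0; exact hx (by simp [hv0]))).restrict _
  have hmem2 : MemLp (fun t => t * ‖u t‖) (ENNReal.ofReal 2) (volume.restrict (Set.Ioi R)) := by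
    have : ENNReal.ofReal 2 = 2 := by norm_num
    rw [this]
    exact ((continuous_id.mul hucont.norm).memLp_of_hasCompactSupport (μ := volume)
      (by apply hsupp.mono; intro x hx hu0; exact hx (by simp [hu0]))).restrict _
  have hnn1 : 0 ≤ᵐ[volume.restrict (Set.Ioi R)] fun t => t * ‖v t‖ := by
    rw [Filter.EventuallyLE, ae_restrict_iff' measurableSet_Ioi]
    apply Filter.Eventually.of_forall
    intro t ht
    exact mul_nonneg (le_of_lt (lt_trans hR ht)) (norm_nonneg _)
  have hnn2 : 0 ≤ᵐ[volume.restrict (Set.Ioi R)] fun t => t * ‖u t‖ := by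
    rw [Filter.EventuallyLE, ae_restrict_iff' measurableSet_Ioi]
    apply Filter.Eventually.of_forall
    intro t ht
    exact mul_nonneg (le_of_lt (lt_trans hR ht)) (norm_nonneg _)
  have hcs := integral_mul_le_Lp_mul_Lq_of_nonneg h22 hnn1 hnn2 hmem1 hmem2
  have hA : (∫ t in Set.Ioi R, (t * ‖v t‖) ^ (2:ℝ)) = ∫ t in Set.Ioi R, t ^ 2 * ‖v t‖ ^ 2 := by
    apply integral_congr_ae
    apply Filter.Eventually.of_forall
    intro t
    show (t * ‖v t‖) ^ (2:ℝ) = t ^ 2 * ‖v t‖ ^ 2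
    rw [show (2:ℝ) = ((2:ℕ):ℝ) by norm_num, Real.rpow_natCast, mul_pow]
  have hB : (∫ t in Set.Ioi R, (t * ‖u t‖) ^ (2:ℝ)) = ∫ t in Set.Ioi R, t ^ 2 * ‖u t‖ ^ 2 := by
    apply integral_congr_ae
    apply Filter.Eventually.of_forall
    intro t
    show (t * ‖u t‖) ^ (2:ℝ) = t ^ 2 * ‖u t‖ ^ 2
    rw [show (2:ℝ) = ((2:ℕ):ℝ) by norm_num, Real.rpow_natCast, mul_pow]
  rw [hA, hB] at hcs
  have hsq1 : (∫ t in Set.Ioi R, t ^ 2 * ‖v t‖ ^ 2) ^ ((1:ℝ)/2) =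
      Real.sqrt (∫ t in Set.Ioi R, t ^ 2 * ‖v t‖ ^ 2) := (Real.sqrt_eq_rpow _).symm
  have hsq2 : (∫ t in Set.Ioi R, t ^ 2 * ‖u t‖ ^ 2) ^ ((1:ℝ)/2) =
      Real.sqrt (∫ t in Set.Ioi R, t ^ 2 * ‖u t‖ ^ 2) := (Real.sqrt_eq_rpow _).symm
  rw [hsq1, hsq2] at hcs
  have hc : (0:ℝ) ≤ 2 / R ^ 2 := by positivity
  calc ‖u r‖ ^ 2 ≤ ∫ t in Set.Ioi R, F t := step1
    _ ≤ 2 / R ^ 2 * ∫ t in Set.Ioi R, G t := step2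
    _ ≤ 2 / R ^ 2 * (Real.sqrt (∫ t in Set.Ioi R, t ^ 2 * ‖v t‖ ^ 2) *
        Real.sqrt (∫ t in Set.Ioi R, t ^ 2 * ‖u t‖ ^ 2)) := by
        apply mul_le_mul_of_nonneg_left _ hc
        exact hcs
    _ = 2 / R ^ 2 * Real.sqrt (∫ t in Set.Ioi R, t ^ 2 * ‖deriv u t‖ ^ 2) *
        Real.sqrt (∫ t in Set.Ioi R, t ^ 2 * ‖u t‖ ^ 2) := by
        rw [hv]; ring
end

section
/- Let u : ℝ → ℂ be continuously differentiable with compact support. Then for every R > 0, ∫_R^∞ |u(r)|⁴ r² dr ≤ 2 R^{-2} ‖r·u'‖_{L²(R,∞)} · ‖r·u‖_{L²(R,∞)}³. -/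
open MeasureTheory Set

/-- Auxiliary: a continuous function vanishing outside a compact set is integrable. -/
lemma aux_integrable {v : ℝ → ℝ} {K : Set ℝ} (hK : IsCompact K) (hv : Continuous v)
    (h0 : ∀ x, x ∉ K → v x = 0) : Integrable v := by
  exact hv.integrable_of_hasCompactSupport (HasCompactSupport.intro hK h0)

/-- For `u : ℝ → ℂ` continuously differentiable with compact support and `R > 0`,
`∫_R^∞ |u(r)|⁴ r² dr ≤ 2 R^{-2} ‖r·u'‖_{L²(R,∞)} ‖r·u‖_{L²(R,∞)}³`. -/
theorem stmt7 (u : ℝ → ℂ) (hu : ContDiff ℝ 1 u) (hsupp : HasCompactSupport u)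
    (R : ℝ) (hR : 0 < R) :
    (∫ r in Set.Ioi R, ‖u r‖ ^ 4 * r ^ 2) ≤
      2 / R ^ 2 * Real.sqrt (∫ r in Set.Ioi R, r ^ 2 * ‖deriv u r‖ ^ 2) *
        Real.sqrt (∫ r in Set.Ioi R, r ^ 2 * ‖u r‖ ^ 2) ^ 3 := by
  have hcu : Continuous u := hu.continuous
  have hcu' : Continuous (deriv u) := hu.continuous_deriv le_rfl
  have hdu : Differentiable ℝ u := hu.differentiable one_ne_zero
  have hK : IsCompact (tsupport u) := hsupp
  -- vanishing of u and deriv u off tsupport u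
  have hu0 : ∀ x, x ∉ tsupport u → u x = 0 := fun x hx => image_eq_zero_of_notMem_tsupport hx
  have hu'0 : ∀ x, x ∉ tsupport u → deriv u x = 0 := fun x hx => by
    have : x ∉ tsupport (deriv u) := fun h => hx ((closure_minimal support_deriv_subset isClosed_closure) h)
    exact image_eq_zero_of_notMem_tsupport this
  set A := Real.sqrt (∫ r in Set.Ioi R, r ^ 2 * ‖deriv u r‖ ^ 2) with hA
  set B := Real.sqrt (∫ r in Set.Ioi R, r ^ 2 * ‖u r‖ ^ 2) with hB
  have hAnn : 0 ≤ A := Real.sqrt_nonneg _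
  have hBnn : 0 ≤ B := Real.sqrt_nonneg _
  -- integrability of the various integrands
  have I2 : Integrable (fun r : ℝ => r ^ 2 * ‖u r‖ ^ 2) :=
    aux_integrable hK ((continuous_pow 2).mul (hcu.norm.pow 2)) (fun x hx => by simp [hu0 x hx])
  have I3 : Integrable (fun r : ℝ => r ^ 2 * ‖deriv u r‖ ^ 2) :=
    aux_integrable hK ((continuous_pow 2).mul (hcu'.norm.pow 2)) (fun x hx => by simp [hu'0 x hx])
  have I4 : Integrable (fun r : ℝ => ‖u r‖ ^ 2) :=
    aux_integrable hK (hcu.norm.pow 2) (fun x hx => by simp [hu0 x hx])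
  have I1 : Integrable (fun r : ℝ => ‖u r‖ ^ 4 * r ^ 2) :=
    aux_integrable hK ((hcu.norm.pow 4).mul (continuous_pow 2)) (fun x hx => by simp [hu0 x hx])
  have Imix : Integrable (fun x : ℝ => 2 * ((x * ‖u x‖) * (x * ‖deriv u x‖))) :=
    aux_integrable hK (continuous_const.mul ((continuous_id.mul hcu.norm).mul
      (continuous_id.mul hcu'.norm))) (fun x hx => by simp [hu0 x hx])
  have hI2nn : 0 ≤ ∫ r in Set.Ioi R, r ^ 2 * ‖u r‖ ^ 2 :=
    setIntegral_nonneg measurableSet_Ioi (fun x _ => by positivity)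
  have hB2 : B ^ 2 = ∫ r in Set.Ioi R, r ^ 2 * ‖u r‖ ^ 2 := Real.sq_sqrt hI2nn
  -- Key pointwise bound: for r ≥ R, r² ‖u r‖² ≤ 2 A B
  have key : ∀ r : ℝ, R ≤ r → r ^ 2 * ‖u r‖ ^ 2 ≤ 2 * A * B := by
    intro r hr
    have hrpos : 0 < r := lt_of_lt_of_le hR hr
    set φ : ℝ → ℝ := fun x =>
      2 * x * ‖u x‖ ^ 2 + x ^ 2 * (2 * (inner ℝ (u x) (deriv u x) : ℝ)) with hφ
    have hφcont : Continuous φ := by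
      apply Continuous.add
      · continuity
      · exact (continuous_pow 2).mul ((continuous_const.mul
          ((continuous_inner.comp (hcu.prodMk hcu')))))
    have hφ0 : ∀ x, x ∉ tsupport u → φ x = 0 := fun x hx => by
      simp [hφ, hu0 x hx]
    have Iφ : Integrable φ := aux_integrable hK hφcont hφ0
    have hderiv : ∀ x : ℝ, HasDerivAt (fun s : ℝ => s ^ 2 * ‖u s‖ ^ 2) (φ x) x := by
      intro x
      have h1 : HasDerivAt (fun s : ℝ => s ^ 2) (2 * x) x := by
        simpa using hasDerivAt_pow 2 x
      have h2 : HasDerivAt (fun s : ℝ => ‖u s‖ ^ 2)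
          (2 * (inner ℝ (u x) (deriv u x) : ℝ)) x :=
        (hdu x).hasDerivAt.norm_sq
      exact h1.mul h2
    -- FTC on (r, ∞)
    have htend : Filter.Tendsto (fun s : ℝ => s ^ 2 * ‖u s‖ ^ 2) Filter.atTop (nhds 0) := by
      obtain ⟨M, hM⟩ := hK.bddAbove
      apply Filter.Tendsto.congr' _ tendsto_const_nhds
      filter_upwards [Filter.eventually_gt_atTop M] with s hs
      have : s ∉ tsupport u := fun h => absurd (hM h) (not_le.mpr hs)
      simp [hu0 s this]
    have hFTC : ∫ x in Set.Ioi r, φ x = 0 - r ^ 2 * ‖u r‖ ^ 2 :=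
      integral_Ioi_of_hasDerivAt_of_tendsto' (fun x _ => hderiv x) Iφ.integrableOn htend
    have heq : r ^ 2 * ‖u r‖ ^ 2 = ∫ x in Set.Ioi r, -φ x := by
      rw [integral_neg]; linarith [hFTC]
    -- bound -φ pointwise on Ioi r
    have hstep : (∫ x in Set.Ioi r, -φ x) ≤
        ∫ x in Set.Ioi r, 2 * ((x * ‖u x‖) * (x * ‖deriv u x‖)) := by
      apply setIntegral_mono_on Iφ.neg.integrableOn Imix.integrableOn measurableSet_Ioi
      intro x hx
      have hxpos : 0 < x := lt_trans hrpos hx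
      have hinner : -(inner ℝ (u x) (deriv u x) : ℝ) ≤ ‖u x‖ * ‖deriv u x‖ := by
        have := abs_real_inner_le_norm (u x) (deriv u x)
        have := neg_abs_le (inner ℝ (u x) (deriv u x) : ℝ)
        linarith
      have h1 : 0 ≤ 2 * x * ‖u x‖ ^ 2 := by positivity
      have h2 : x ^ 2 * (2 * -(inner ℝ (u x) (deriv u x) : ℝ)) ≤
          x ^ 2 * (2 * (‖u x‖ * ‖deriv u x‖)) := by
        apply mul_le_mul_of_nonneg_left _ (by positivity)
        linarith
      have h3 : 2 * ((x * ‖u x‖) * (x * ‖deriv u x‖)) =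
          x ^ 2 * (2 * (‖u x‖ * ‖deriv u x‖)) := by ring
      simp only [Pi.neg_apply, hφ]
      linarith [h1, h2, h3]
    -- Cauchy–Schwarz on Ioi r
    have hCS : (∫ x in Set.Ioi r, (x * ‖u x‖) * (x * ‖deriv u x‖)) ≤
        Real.sqrt (∫ x in Set.Ioi r, x ^ 2 * ‖u x‖ ^ 2) *
          Real.sqrt (∫ x in Set.Ioi r, x ^ 2 * ‖deriv u x‖ ^ 2) := by
      have hpq : Real.HolderConjugate 2 2 := by constructor <;> norm_num
      have hmf : MemLp (fun x : ℝ => x * ‖u x‖) (ENNReal.ofReal 2)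
          (volume.restrict (Set.Ioi r)) := by
        refine MemLp.restrict _ ?_
        exact Continuous.memLp_of_hasCompactSupport (continuous_id.mul hcu.norm)
          (HasCompactSupport.intro hK (fun x hx => by simp [hu0 x hx]))
      have hmg : MemLp (fun x : ℝ => x * ‖deriv u x‖) (ENNReal.ofReal 2)
          (volume.restrict (Set.Ioi r)) := by
        refine MemLp.restrict _ ?_
        exact Continuous.memLp_of_hasCompactSupport (continuous_id.mul hcu'.norm)
          (HasCompactSupport.intro hK (fun x hx => by simp [hu'0 x hx]))
      have hae1 : 0 ≤ᵐ[volume.restrict (Set.Ioi r)] fun x : ℝ => x * ‖u x‖ := by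
        refine (ae_restrict_iff' measurableSet_Ioi).mpr
          (Filter.Eventually.of_forall (fun x hx => ?_))
        have : 0 < x := lt_trans hrpos hx
        positivity
      have hae2 : 0 ≤ᵐ[volume.restrict (Set.Ioi r)] fun x : ℝ => x * ‖deriv u x‖ := by
        refine (ae_restrict_iff' measurableSet_Ioi).mpr
          (Filter.Eventually.of_forall (fun x hx => ?_))
        have : 0 < x := lt_trans hrpos hx
        positivity
      have := MeasureTheory.integral_mul_le_Lp_mul_Lq_of_nonneg hpq hae1 hae2 hmf hmg
      calc (∫ x in Set.Ioi r, (x * ‖u x‖) * (x * ‖deriv u x‖))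
          ≤ (∫ x in Set.Ioi r, (x * ‖u x‖) ^ (2 : ℝ)) ^ (1 / (2:ℝ)) *
            (∫ x in Set.Ioi r, (x * ‖deriv u x‖) ^ (2 : ℝ)) ^ (1 / (2:ℝ)) := this
        _ = Real.sqrt (∫ x in Set.Ioi r, x ^ 2 * ‖u x‖ ^ 2) *
            Real.sqrt (∫ x in Set.Ioi r, x ^ 2 * ‖deriv u x‖ ^ 2) := by
            rw [← Real.sqrt_eq_rpow, ← Real.sqrt_eq_rpow]
            have e1 : (∫ x in Set.Ioi r, (x * ‖u x‖) ^ (2:ℝ)) =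
                ∫ x in Set.Ioi r, x ^ 2 * ‖u x‖ ^ 2 := by
              apply integral_congr_ae
              refine Filter.Eventually.of_forall (fun x => ?_)
              simp only [Real.rpow_two]; ring
            have e2 : (∫ x in Set.Ioi r, (x * ‖deriv u x‖) ^ (2:ℝ)) =
                ∫ x in Set.Ioi r, x ^ 2 * ‖deriv u x‖ ^ 2 := by
              apply integral_congr_ae
              refine Filter.Eventually.of_forall (fun x => ?_)
              simp only [Real.rpow_two]; ring
            rw [e1, e2]
    -- monotonicity of the integrals in the domain
    have hmono1 : (∫ x in Set.Ioi r, x ^ 2 * ‖u x‖ ^ 2) ≤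
        ∫ x in Set.Ioi R, x ^ 2 * ‖u x‖ ^ 2 := by
      apply setIntegral_mono_set I2.integrableOn
        (Filter.Eventually.of_forall (fun x => by positivity))
      exact HasSubset.Subset.eventuallyLE (Ioi_subset_Ioi hr)
    have hmono2 : (∫ x in Set.Ioi r, x ^ 2 * ‖deriv u x‖ ^ 2) ≤
        ∫ x in Set.Ioi R, x ^ 2 * ‖deriv u x‖ ^ 2 := by
      apply setIntegral_mono_set I3.integrableOn
        (Filter.Eventually.of_forall (fun x => by positivity))
      exact HasSubset.Subset.eventuallyLE (Ioi_subset_Ioi hr)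
    have hsq1 : Real.sqrt (∫ x in Set.Ioi r, x ^ 2 * ‖u x‖ ^ 2) ≤ B :=
      Real.sqrt_le_sqrt hmono1
    have hsq2 : Real.sqrt (∫ x in Set.Ioi r, x ^ 2 * ‖deriv u x‖ ^ 2) ≤ A :=
      Real.sqrt_le_sqrt hmono2
    calc r ^ 2 * ‖u r‖ ^ 2 = ∫ x in Set.Ioi r, -φ x := heq
      _ ≤ ∫ x in Set.Ioi r, 2 * ((x * ‖u x‖) * (x * ‖deriv u x‖)) := hstep
      _ = 2 * ∫ x in Set.Ioi r, (x * ‖u x‖) * (x * ‖deriv u x‖) := by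
          rw [← integral_const_mul]
      _ ≤ 2 * (Real.sqrt (∫ x in Set.Ioi r, x ^ 2 * ‖u x‖ ^ 2) *
            Real.sqrt (∫ x in Set.Ioi r, x ^ 2 * ‖deriv u x‖ ^ 2)) := by
          linarith [hCS]
      _ ≤ 2 * (B * A) := by
          apply mul_le_mul_of_nonneg_left _ (by norm_num)
          exact mul_le_mul hsq1 hsq2 (Real.sqrt_nonneg _) hBnn
      _ = 2 * A * B := by ring
  -- Step 2: ∫ ‖u‖⁴ r² ≤ 2 A B ∫ ‖u‖²
  have step2 : (∫ r in Set.Ioi R, ‖u r‖ ^ 4 * r ^ 2) ≤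
      2 * A * B * ∫ r in Set.Ioi R, ‖u r‖ ^ 2 := by
    rw [← integral_const_mul]
    apply setIntegral_mono_on I1.integrableOn (I4.const_mul _).integrableOn measurableSet_Ioi
    intro x hx
    have hx' : R ≤ x := le_of_lt hx
    have := key x hx'
    have hn : 0 ≤ ‖u x‖ ^ 2 := by positivity
    calc ‖u x‖ ^ 4 * x ^ 2 = (x ^ 2 * ‖u x‖ ^ 2) * ‖u x‖ ^ 2 := by ring
      _ ≤ (2 * A * B) * ‖u x‖ ^ 2 := mul_le_mul_of_nonneg_right this hn
  -- Step 3: ∫ ‖u‖² ≤ (1/R²) ∫ r² ‖u‖²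
  have step3 : (∫ r in Set.Ioi R, ‖u r‖ ^ 2) ≤
      (1 / R ^ 2) * ∫ r in Set.Ioi R, r ^ 2 * ‖u r‖ ^ 2 := by
    rw [← integral_const_mul]
    apply setIntegral_mono_on I4.integrableOn (I2.const_mul _).integrableOn measurableSet_Ioi
    intro x hx
    have hx' : R ≤ x := le_of_lt hx
    have hR2 : R ^ 2 ≤ x ^ 2 := by nlinarith
    rw [div_mul_eq_mul_div, one_mul, le_div_iff₀ (by positivity)]
    nlinarith [norm_nonneg (u x), sq_nonneg (‖u x‖)]
  have hintnn : 0 ≤ ∫ r in Set.Ioi R, ‖u r‖ ^ 2 :=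
    setIntegral_nonneg measurableSet_Ioi (fun x _ => by positivity)
  calc (∫ r in Set.Ioi R, ‖u r‖ ^ 4 * r ^ 2)
      ≤ 2 * A * B * ∫ r in Set.Ioi R, ‖u r‖ ^ 2 := step2
    _ ≤ 2 * A * B * ((1 / R ^ 2) * ∫ r in Set.Ioi R, r ^ 2 * ‖u r‖ ^ 2) := by
        exact mul_le_mul_of_nonneg_left step3 (mul_nonneg (mul_nonneg (by norm_num) hAnn) hBnn)
    _ = 2 * A * B * ((1 / R ^ 2) * B ^ 2) := by rw [hB2]
    _ = 2 / R ^ 2 * A * B ^ 3 := by field_simp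
end

section
/- Let u : ℝ³ → ℂ be continuously differentiable with compact support and radial (u(x) depends only on |x|). Then for every m > 0, ∫_{|x|>m} |u(x)|⁴ dx ≤ m^{-2} (∫_{|x|>m} |∇u(x)|² dx)^{1/2} · (∫_{|x|>m} |u(x)|² dx)^{3/2}. (In fact the inequality holds with the absolute constant 1/(2π) ≤ 1 in front of the right-hand side.) -/
open MeasureTheory Set

noncomputable section
local notation "E3" => EuclideanSpace ℝ (Fin 3)

lemma vol_ball3 : (volume (Metric.ball (0:E3) 1)).toReal = 4 * Real.pi / 3 := by
  rw [EuclideanSpace.volume_ball]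
  have h52 : Real.Gamma ((Fintype.card (Fin 3)) / 2 + 1) = 3/4 * Real.sqrt Real.pi := by
    simp only [Fintype.card_fin]
    have : ((3:ℕ):ℝ)/2 + 1 = 3/2 + 1 := by norm_num
    rw [this, Real.Gamma_add_one (by norm_num)]
    have : (3:ℝ)/2 = 1/2 + 1 := by norm_num
    rw [this, Real.Gamma_add_one (by norm_num), Real.Gamma_one_half_eq]
    ring
  rw [h52]
  have hπ : 0 < Real.pi := Real.pi_pos
  have hs : Real.sqrt Real.pi > 0 := Real.sqrt_pos.mpr hπ
  have h3 : Real.sqrt Real.pi ^ Fintype.card (Fin 3) / (3/4 * Real.sqrt Real.pi)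
      = 4 * Real.pi / 3 := by
    simp only [Fintype.card_fin]
    have hsq : Real.sqrt Real.pi ^ 3 = Real.pi * Real.sqrt Real.pi := by
      nlinarith [Real.sq_sqrt hπ.le]
    rw [hsq]; field_simp
  rw [h3]
  simp [ENNReal.toReal_ofReal (by positivity : (0:ℝ) ≤ 4 * Real.pi / 3)]

lemma polar3 (φ : ℝ → ℝ) {m : ℝ} (hm : 0 < m) :
    ∫ x in {x : E3 | m < ‖x‖}, φ ‖x‖ = (4 * Real.pi) * ∫ y in Ioi m, y ^ 2 * φ y := by
  have hS : MeasurableSet {x : E3 | m < ‖x‖} :=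
    (isOpen_lt continuous_const continuous_norm).measurableSet
  have h1 : ∫ x in {x : E3 | m < ‖x‖}, φ ‖x‖
      = ∫ x : E3, (Ioi m).indicator φ ‖x‖ := by
    rw [← integral_indicator hS]
    refine integral_congr_ae (.of_forall fun x => ?_)
    by_cases hx : m < ‖x‖
    · simp only [indicator_of_mem (show x ∈ {x : E3 | m < ‖x‖} from hx),
        indicator_of_mem (show ‖x‖ ∈ Ioi m from hx)]
    · simp only [indicator_of_notMem (show x ∉ {x : E3 | m < ‖x‖} from hx),
        indicator_of_notMem (show ‖x‖ ∉ Ioi m from hx)]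
  rw [h1, integral_fun_norm_addHaar volume ((Ioi m).indicator φ)]
  have hdim : Module.finrank ℝ E3 = 3 := by simp [finrank_euclideanSpace]
  rw [hdim, measureReal_def, vol_ball3]
  have h2 : ∫ y in Ioi (0:ℝ), y ^ (3-1) • (Ioi m).indicator φ y
      = ∫ y in Ioi m, y ^ 2 * φ y := by
    have : ∀ y : ℝ, y ^ (3-1) • (Ioi m).indicator φ y
        = (Ioi m).indicator (fun y => y ^ 2 * φ y) y := by
      intro y
      by_cases hy : y ∈ Ioi m
      · rw [indicator_of_mem hy, indicator_of_mem hy]; norm_num [smul_eq_mul]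
      · rw [indicator_of_notMem hy, indicator_of_notMem hy, smul_zero]
    simp_rw [this]
    rw [setIntegral_indicator measurableSet_Ioi, Ioi_inter_Ioi, max_eq_right hm.le]
  rw [h2, nsmul_eq_mul, smul_eq_mul]
  ring

set_option maxHeartbeats 1600000 in
/-- Radial Sobolev inequality in ℝ³: for `u` continuously differentiable with compact
support and radial, and `m > 0`,
`∫_{|x|>m} |u|⁴ dx ≤ m^{-2} (∫_{|x|>m} |∇u|² dx)^{1/2} (∫_{|x|>m} |u|² dx)^{3/2}`. -/
theorem stmt8 (u : EuclideanSpace ℝ (Fin 3) → ℂ) (hu : ContDiff ℝ 1 u)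
    (hsupp : HasCompactSupport u)
    (hrad : ∀ x y : EuclideanSpace ℝ (Fin 3), ‖x‖ = ‖y‖ → u x = u y)
    (m : ℝ) (hm : 0 < m) :
    (∫ x in {x : EuclideanSpace ℝ (Fin 3) | m < ‖x‖}, ‖u x‖ ^ 4) ≤
      1 / m ^ 2 *
        Real.sqrt (∫ x in {x : EuclideanSpace ℝ (Fin 3) | m < ‖x‖}, ‖fderiv ℝ u x‖ ^ 2) *
        (∫ x in {x : EuclideanSpace ℝ (Fin 3) | m < ‖x‖}, ‖u x‖ ^ 2) ^ ((3 : ℝ) / 2) := by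
  have hS : MeasurableSet {x : E3 | m < ‖x‖} :=
    (isOpen_lt continuous_const continuous_norm).measurableSet
  set S : Set E3 := {x : E3 | m < ‖x‖} with hSdef
  -- basic objects
  set e : E3 := EuclideanSpace.single (0 : Fin 3) (1:ℝ) with hedef
  have he : ‖e‖ = 1 := by rw [hedef, EuclideanSpace.norm_single]; norm_num
  set f : ℝ → ℂ := fun r => u (r • e) with hfdef
  set g : ℝ → ℂ := fun r => fderiv ℝ u (r • e) e with hgdef
  have hns : ∀ (r : ℝ) (v : E3), ‖v‖ = 1 → ‖r • v‖ = |r| := by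
    intro r v hv; rw [norm_smul, hv, mul_one, Real.norm_eq_abs]
  have hufx : ∀ x : E3, u x = f ‖x‖ := by
    intro x
    exact hrad x (‖x‖ • e) (by rw [hns _ _ he, abs_of_nonneg (norm_nonneg x)])
  have hudiff : Differentiable ℝ u := hu.differentiable one_ne_zero
  have hline : ∀ v : E3, ‖v‖ = 1 → ∀ r : ℝ, HasDerivAt f (fderiv ℝ u (r • v) v) r := by
    intro v hv r
    have h1 : HasDerivAt (fun t : ℝ => t • v) v r := by
      simpa using (hasDerivAt_id r).smul_const v
    have h2 := (hudiff (r • v)).hasFDerivAt.comp_hasDerivAt r h1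
    have h3 : (u ∘ fun t : ℝ => t • v) = f := by
      funext t
      show u (t • v) = u (t • e)
      exact hrad _ _ (by rw [hns t v hv, hns t e he])
    rwa [h3] at h2
  have hf' : ∀ r, HasDerivAt f (g r) r := fun r => hline e he r
  have hgle : ∀ x : E3, x ≠ 0 → ‖g ‖x‖‖ ≤ ‖fderiv ℝ u x‖ := by
    intro x hx
    set v : E3 := (‖x‖⁻¹ : ℝ) • x with hvdef
    have hv : ‖v‖ = 1 := norm_smul_inv_norm (𝕜 := ℝ) hx
    have hxv : ‖x‖ • v = x := by
      rw [hvdef, smul_smul, mul_inv_cancel₀ (norm_ne_zero_iff.2 hx), one_smul]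
    have h2 := hline v hv ‖x‖
    rw [hxv] at h2
    rw [(hf' ‖x‖).unique h2]
    calc ‖fderiv ℝ u x v‖ ≤ ‖fderiv ℝ u x‖ * ‖v‖ := (fderiv ℝ u x).le_opNorm v
      _ = ‖fderiv ℝ u x‖ := by rw [hv, mul_one]
  -- continuity
  have hfc : Continuous f := hu.continuous.comp (continuous_id.smul continuous_const)
  have hdc : Continuous (fderiv ℝ u) := hu.continuous_fderiv one_ne_zero
  have hgc : Continuous g :=
    (hdc.comp (continuous_id.smul continuous_const)).clm_apply continuous_const
  -- support radius
  obtain ⟨R₀, hR₀⟩ := (hsupp.union (hsupp.fderiv (𝕜 := ℝ))).isBounded.subset_closedBall (0 : E3)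
  have hu0 : ∀ x : E3, R₀ < ‖x‖ → u x = 0 := by
    intro x hx
    refine image_eq_zero_of_notMem_tsupport fun h => ?_
    have := hR₀ (Or.inl h)
    rw [Metric.mem_closedBall, dist_zero_right] at this
    linarith
  have hdu0 : ∀ x : E3, R₀ < ‖x‖ → fderiv ℝ u x = 0 := by
    intro x hx
    refine image_eq_zero_of_notMem_tsupport fun h => ?_
    have := hR₀ (Or.inr h)
    rw [Metric.mem_closedBall, dist_zero_right] at this
    linarith
  have hf0 : ∀ r : ℝ, R₀ < |r| → f r = 0 := fun r hr =>
    hu0 (r • e) (by rwa [hns r e he])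
  have hg0 : ∀ r : ℝ, R₀ < |r| → g r = 0 := fun r hr => by
    rw [hgdef]; simp only; rw [hdu0 (r • e) (by rwa [hns r e he])]; rfl
  -- F and its derivative
  set F : ℝ → ℝ := fun r => ‖f r‖ ^ 2 with hFdef
  set F' : ℝ → ℝ := fun r => 2 * ((f r).re * (g r).re + (f r).im * (g r).im) with hF'def
  have hF' : ∀ r, HasDerivAt F (F' r) r := by
    intro r
    have hre : HasDerivAt (fun t => (f t).re) (g r).re r :=
      Complex.reCLM.hasFDerivAt.comp_hasDerivAt r (hf' r)
    have him : HasDerivAt (fun t => (f t).im) (g r).im r :=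
      Complex.imCLM.hasFDerivAt.comp_hasDerivAt r (hf' r)
    have h := (hre.mul hre).add (him.mul him)
    have hFeq : F = fun t => (f t).re * (f t).re + (f t).im * (f t).im := by
      funext t
      rw [hFdef]
      simp only [Complex.sq_norm, Complex.normSq_apply]
    rw [hFeq]
    refine h.congr_deriv ?_
    rw [hF'def]; ring
  have hbd : ∀ r, |F' r| ≤ 2 * (‖f r‖ * ‖g r‖) := by
    intro r
    have hre_eq : ((starRingEnd ℂ) (f r) * g r).re
        = (f r).re * (g r).re + (f r).im * (g r).im := by
      rw [Complex.mul_re, Complex.conj_re, Complex.conj_im]; ring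
    have key : |(f r).re * (g r).re + (f r).im * (g r).im| ≤ ‖f r‖ * ‖g r‖ := by
      rw [← hre_eq]
      calc |((starRingEnd ℂ) (f r) * g r).re| ≤ ‖(starRingEnd ℂ) (f r) * g r‖ :=
            Complex.abs_re_le_norm _
        _ = ‖f r‖ * ‖g r‖ := by
            rw [norm_mul, Complex.norm_conj]
    calc |F' r| = 2 * |(f r).re * (g r).re + (f r).im * (g r).im| := by
          rw [hF'def]; rw [abs_mul, abs_two]
      _ ≤ 2 * (‖f r‖ * ‖g r‖) := by linarith
  have hF'c : Continuous F' :=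
    continuous_const.mul (((Complex.continuous_re.comp hfc).mul
      (Complex.continuous_re.comp hgc)).add ((Complex.continuous_im.comp hfc).mul
      (Complex.continuous_im.comp hgc)))
  -- integrals
  set If : ℝ := ∫ y in Ioi m, y ^ 2 * ‖f y‖ ^ 2 with hIfdef
  set Ig : ℝ := ∫ y in Ioi m, y ^ 2 * ‖g y‖ ^ 2 with hIgdef
  set A2 : ℝ := ∫ x in S, ‖fderiv ℝ u x‖ ^ 2 with hA2def
  set B2 : ℝ := ∫ x in S, ‖u x‖ ^ 2 with hB2def
  have hIf0 : 0 ≤ If := setIntegral_nonneg measurableSet_Ioi fun y _ => by positivity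
  have hIg0 : 0 ≤ Ig := setIntegral_nonneg measurableSet_Ioi fun y _ => by positivity
  have hA20 : 0 ≤ A2 := setIntegral_nonneg hS fun x _ => by positivity
  have hB20 : 0 ≤ B2 := setIntegral_nonneg hS fun x _ => by positivity
  -- polar identities
  have hB2 : B2 = 4 * Real.pi * If := by
    have h1 : B2 = ∫ x in S, (fun s => ‖f s‖ ^ 2) ‖x‖ := by
      refine integral_congr_ae (.of_forall fun x => ?_)
      simp only [hufx x]
    rw [h1, hSdef, polar3 (fun s => ‖f s‖ ^ 2) hm]
  have hG2 : (∫ x in S, ‖g ‖x‖‖ ^ 2) = 4 * Real.pi * Ig := by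
    rw [hSdef]
    exact polar3 (fun s => ‖g s‖ ^ 2) hm
  -- compact-support integrability
  have intg_gx : Integrable (fun x : E3 => ‖g ‖x‖‖ ^ 2) := by
    refine Continuous.integrable_of_hasCompactSupport
      ((hgc.comp continuous_norm).norm.pow 2) ?_
    refine HasCompactSupport.intro (isCompact_closedBall (0:E3) R₀) fun x hx => ?_
    rw [Metric.mem_closedBall, dist_zero_right, not_le] at hx
    rw [hg0 ‖x‖ (by rwa [abs_of_nonneg (norm_nonneg x)])]
    simp
  have intg_du : Integrable (fun x : E3 => ‖fderiv ℝ u x‖ ^ 2) := by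
    refine Continuous.integrable_of_hasCompactSupport (hdc.norm.pow 2) ?_
    refine HasCompactSupport.intro (isCompact_closedBall (0:E3) R₀) fun x hx => ?_
    rw [Metric.mem_closedBall, dist_zero_right, not_le] at hx
    rw [hdu0 x hx]; simp
  have intg_u2 : Integrable (fun x : E3 => ‖u x‖ ^ 2) := by
    refine Continuous.integrable_of_hasCompactSupport (hu.continuous.norm.pow 2) ?_
    refine HasCompactSupport.intro (isCompact_closedBall (0:E3) R₀) fun x hx => ?_
    rw [Metric.mem_closedBall, dist_zero_right, not_le] at hx
    rw [hu0 x hx]; simp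
  have intg_u4 : Integrable (fun x : E3 => ‖u x‖ ^ 4) := by
    refine Continuous.integrable_of_hasCompactSupport (hu.continuous.norm.pow 4) ?_
    refine HasCompactSupport.intro (isCompact_closedBall (0:E3) R₀) fun x hx => ?_
    rw [Metric.mem_closedBall, dist_zero_right, not_le] at hx
    rw [hu0 x hx]; simp
  have hG2le : (∫ x in S, ‖g ‖x‖‖ ^ 2) ≤ A2 := by
    refine setIntegral_mono_on intg_gx.integrableOn intg_du.integrableOn hS fun x hx => ?_
    have hx0 : x ≠ 0 := by
      intro h
      rw [hSdef] at hx
      simp only [mem_setOf_eq, h, norm_zero] at hx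
      linarith
    exact pow_le_pow_left₀ (norm_nonneg _) (hgle x hx0) 2
  have hIgA : 4 * Real.pi * Ig ≤ A2 := hG2 ▸ hG2le
  -- compact support for 1d functions
  have hcs1 : HasCompactSupport (fun s : ℝ => s * ‖f s‖) := by
    refine HasCompactSupport.intro (isCompact_closedBall (0:ℝ) R₀) fun s hs => ?_
    rw [Metric.mem_closedBall, Real.dist_0_eq_abs, not_le] at hs
    rw [hf0 s hs]; simp
  have hcs2 : HasCompactSupport (fun s : ℝ => s * ‖g s‖) := by
    refine HasCompactSupport.intro (isCompact_closedBall (0:ℝ) R₀) fun s hs => ?_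
    rw [Metric.mem_closedBall, Real.dist_0_eq_abs, not_le] at hs
    rw [hg0 s hs]; simp
  have hml1 : MemLp (fun s : ℝ => s * ‖f s‖) (ENNReal.ofReal 2)
      (volume.restrict (Ioi m)) :=
    ((continuous_id.mul hfc.norm).memLp_of_hasCompactSupport hcs1).restrict _
  have hml2 : MemLp (fun s : ℝ => s * ‖g s‖) (ENNReal.ofReal 2)
      (volume.restrict (Ioi m)) :=
    ((continuous_id.mul hgc.norm).memLp_of_hasCompactSupport hcs2).restrict _
  have intprod : Integrable (fun s : ℝ => 2 * ‖f s‖ * ‖g s‖ * s ^ 2) := by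
    refine Continuous.integrable_of_hasCompactSupport
      (((continuous_const.mul hfc.norm).mul hgc.norm).mul (continuous_pow 2)) ?_
    refine HasCompactSupport.intro (isCompact_closedBall (0:ℝ) R₀) fun s hs => ?_
    rw [Metric.mem_closedBall, Real.dist_0_eq_abs, not_le] at hs
    rw [hf0 s hs]; simp
  -- the key pointwise estimate
  have hkey : ∀ r : ℝ, m < r → F r * r ^ 2 ≤ 2 * (Real.sqrt If * Real.sqrt Ig) := by
    intro r hr
    have hr0 : 0 < r := hm.trans hr
    set R : ℝ := max (r + 1) (R₀ + 1) with hRdef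
    have hrR : r ≤ R := le_trans (by linarith) (le_max_left _ _)
    have hR0 : 0 < R := lt_of_lt_of_le (by linarith) (le_max_left _ _)
    have hFR : F R = 0 := by
      rw [hFdef]; simp only
      rw [hf0 R (by rw [abs_of_pos hR0]; exact lt_of_lt_of_le (by linarith) (le_max_right _ _))]
      simp
    have hftc : ∫ s in r..R, F' s = F R - F r :=
      intervalIntegral.integral_eq_sub_of_hasDerivAt (fun s _ => hF' s)
        (hF'c.intervalIntegrable r R)
    have h0 : F r = ∫ s in r..R, -F' s := by
      rw [intervalIntegral.integral_neg, hftc, hFR]; ring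
    have step1 : F r ≤ ∫ s in r..R, 2 * ‖f s‖ * ‖g s‖ := by
      rw [h0]
      refine intervalIntegral.integral_mono_on hrR
        ((hF'c.neg).intervalIntegrable r R)
        (((continuous_const.mul hfc.norm).mul hgc.norm).intervalIntegrable r R)
        fun s _ => ?_
      have := hbd s
      have h1 := neg_abs_le (F' s)
      calc -F' s ≤ |F' s| := (neg_le_abs _)
        _ ≤ 2 * (‖f s‖ * ‖g s‖) := hbd s
        _ = 2 * ‖f s‖ * ‖g s‖ := by ring
    have step2 : F r * r ^ 2 ≤ ∫ s in r..R, 2 * ‖f s‖ * ‖g s‖ * s ^ 2 := by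
      have h1 : F r * r ^ 2 ≤ (∫ s in r..R, 2 * ‖f s‖ * ‖g s‖) * r ^ 2 :=
        mul_le_mul_of_nonneg_right step1 (sq_nonneg r)
      have h2 : (∫ s in r..R, 2 * ‖f s‖ * ‖g s‖) * r ^ 2
          = ∫ s in r..R, 2 * ‖f s‖ * ‖g s‖ * r ^ 2 :=
        (intervalIntegral.integral_mul_const _ _).symm
      refine h1.trans (h2 ▸ ?_)
      refine intervalIntegral.integral_mono_on hrR
        ((((continuous_const.mul hfc.norm).mul hgc.norm).mul continuous_const).intervalIntegrable r R)
        ((((continuous_const.mul hfc.norm).mul hgc.norm).mul (continuous_pow 2)).intervalIntegrable r R)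
        fun s hs => ?_
      have hrs : r ≤ s := hs.1
      have : r ^ 2 ≤ s ^ 2 := by nlinarith
      have hnn : 0 ≤ 2 * ‖f s‖ * ‖g s‖ := by positivity
      nlinarith
    have step3 : (∫ s in r..R, 2 * ‖f s‖ * ‖g s‖ * s ^ 2)
        ≤ ∫ s in Ioi m, 2 * ‖f s‖ * ‖g s‖ * s ^ 2 := by
      rw [intervalIntegral.integral_of_le hrR]
      refine setIntegral_mono_set intprod.integrableOn ?_ ?_
      · filter_upwards [ae_restrict_mem measurableSet_Ioi] with s hs
        have : (0:ℝ) < s := lt_trans hm hs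
        positivity
      · refine HasSubset.Subset.eventuallyLE fun s hs => ?_
        exact lt_trans hr hs.1
    have step4 : (∫ s in Ioi m, 2 * ‖f s‖ * ‖g s‖ * s ^ 2)
        = 2 * ∫ s in Ioi m, (s * ‖f s‖) * (s * ‖g s‖) := by
      rw [← integral_const_mul]
      refine integral_congr_ae (.of_forall fun s => ?_)
      ring
    have holder : (∫ s in Ioi m, (s * ‖f s‖) * (s * ‖g s‖))
        ≤ Real.sqrt If * Real.sqrt Ig := by
      have hconj : Real.HolderConjugate 2 2 := by constructor <;> norm_num
      have h := integral_mul_le_Lp_mul_Lq_of_nonneg hconj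
        (f := fun s : ℝ => s * ‖f s‖) (g := fun s : ℝ => s * ‖g s‖)
        ?_ ?_ hml1 hml2
      · beta_reduce at h
        have e1 : (∫ a in Ioi m, (a * ‖f a‖) ^ (2:ℝ)) = If := by
          rw [hIfdef]
          refine integral_congr_ae (.of_forall fun s => ?_)
          show (s * ‖f s‖) ^ (2:ℝ) = s ^ 2 * ‖f s‖ ^ 2
          rw [show (2:ℝ) = ((2:ℕ):ℝ) by norm_num, Real.rpow_natCast, mul_pow]
        have e2 : (∫ a in Ioi m, (a * ‖g a‖) ^ (2:ℝ)) = Ig := by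
          rw [hIgdef]
          refine integral_congr_ae (.of_forall fun s => ?_)
          show (s * ‖g s‖) ^ (2:ℝ) = s ^ 2 * ‖g s‖ ^ 2
          rw [show (2:ℝ) = ((2:ℕ):ℝ) by norm_num, Real.rpow_natCast, mul_pow]
        rw [e1, e2] at h
        rw [Real.sqrt_eq_rpow, Real.sqrt_eq_rpow]
        convert h using 2 <;> norm_num
      · filter_upwards [ae_restrict_mem measurableSet_Ioi] with s hs
        have : (0:ℝ) < s := lt_trans hm hs
        positivity
      · filter_upwards [ae_restrict_mem measurableSet_Ioi] with s hs
        have : (0:ℝ) < s := lt_trans hm hs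
        positivity
    calc F r * r ^ 2 ≤ ∫ s in r..R, 2 * ‖f s‖ * ‖g s‖ * s ^ 2 := step2
      _ ≤ ∫ s in Ioi m, 2 * ‖f s‖ * ‖g s‖ * s ^ 2 := step3
      _ = 2 * ∫ s in Ioi m, (s * ‖f s‖) * (s * ‖g s‖) := step4
      _ ≤ 2 * (Real.sqrt If * Real.sqrt Ig) := by linarith [holder]
  -- comparison of constants
  have hpi : (2:ℝ) ≤ 4 * Real.pi := by nlinarith [Real.pi_gt_three]
  have h2sq : 2 * (Real.sqrt If * Real.sqrt Ig) ≤ Real.sqrt A2 * Real.sqrt B2 := by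
    have hL : 2 * (Real.sqrt If * Real.sqrt Ig) = Real.sqrt (4 * (If * Ig)) := by
      rw [Real.sqrt_mul (by norm_num : (0:ℝ) ≤ 4), show Real.sqrt 4 = 2 by
        rw [show (4:ℝ) = 2 ^ 2 by norm_num, Real.sqrt_sq (by norm_num : (0:ℝ) ≤ 2)],
        Real.sqrt_mul hIf0]
    have hR : Real.sqrt A2 * Real.sqrt B2 = Real.sqrt (A2 * B2) :=
      (Real.sqrt_mul hA20 _).symm
    rw [hL, hR]
    refine Real.sqrt_le_sqrt ?_
    have h16 : (4:ℝ) ≤ (4*Real.pi)*(4*Real.pi) := by nlinarith [hpi]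
    have hfg : (0:ℝ) ≤ If * Ig := mul_nonneg hIf0 hIg0
    have s1 : 4*(If*Ig) ≤ (4*Real.pi)*(4*Real.pi)*(If*Ig) := by nlinarith
    have s2 : (4*Real.pi)*(4*Real.pi)*(If*Ig) = (4*Real.pi*Ig)*B2 := by rw [hB2]; ring
    have s3 : (4*Real.pi*Ig)*B2 ≤ A2*B2 := mul_le_mul_of_nonneg_right hIgA hB20
    linarith
  set C : ℝ := Real.sqrt A2 * Real.sqrt B2 with hCdef
  have hC0 : 0 ≤ C := mul_nonneg (Real.sqrt_nonneg _) (Real.sqrt_nonneg _)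
  have hsup : ∀ x ∈ S, ‖u x‖ ^ 4 ≤ C / m ^ 2 * ‖u x‖ ^ 2 := by
    intro x hx
    have hxm : m < ‖x‖ := hx
    have hFk : F ‖x‖ * ‖x‖ ^ 2 ≤ C := le_trans (hkey ‖x‖ hxm) h2sq
    have hF0 : 0 ≤ F ‖x‖ := by rw [hFdef]; positivity
    have hm2 : F ‖x‖ * m ^ 2 ≤ C := by
      refine le_trans ?_ hFk
      have : m ^ 2 ≤ ‖x‖ ^ 2 := by nlinarith
      nlinarith
    have hFle : F ‖x‖ ≤ C / m ^ 2 := by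
      rw [le_div_iff₀ (by positivity)]
      exact hm2
    have hux : ‖u x‖ ^ 2 = F ‖x‖ := by rw [hFdef, hufx x]
    calc ‖u x‖ ^ 4 = F ‖x‖ * ‖u x‖ ^ 2 := by rw [← hux]; ring
      _ ≤ C / m ^ 2 * ‖u x‖ ^ 2 := by
          refine mul_le_mul_of_nonneg_right hFle (by positivity)
  have final1 : (∫ x in S, ‖u x‖ ^ 4) ≤ C / m ^ 2 * B2 := by
    have h1 : (∫ x in S, ‖u x‖ ^ 4) ≤ ∫ x in S, C / m ^ 2 * ‖u x‖ ^ 2 :=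
      setIntegral_mono_on intg_u4.integrableOn
        (intg_u2.integrableOn.const_mul _) hS hsup
    rwa [integral_const_mul] at h1
  -- rewrite RHS
  have hB32 : B2 ^ ((3:ℝ)/2) = B2 * Real.sqrt B2 := by
    have h1 : B2 = Real.sqrt B2 ^ 2 := (Real.sq_sqrt hB20).symm
    nth_rewrite 1 [h1]
    rw [← Real.rpow_natCast (Real.sqrt B2) 2, ← Real.rpow_mul (Real.sqrt_nonneg _)]
    norm_num
    rw [pow_succ, Real.sq_sqrt hB20]
  calc (∫ x in S, ‖u x‖ ^ 4) ≤ C / m ^ 2 * B2 := final1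
    _ = 1 / m ^ 2 * Real.sqrt A2 * B2 ^ ((3:ℝ)/2) := by
        rw [hB32, hCdef]; ring
end
end

section
/- Let u : ℝ → ℂ be continuously differentiable with compact support. Let m > 0 and let f : ℝ → ℝ be continuously differentiable, nondecreasing, with 0 ≤ f ≤ 1 and f(r) = 0 for all r ≤ m. Then for every λ > 0, ∫_m^∞ f(r) |u(r)|⁴ r² dr ≤ λ ∫_m^∞ f(r) |u'(r)|² r² dr + λ^{-1} m^{-4} (∫_m^∞ |u(r)|² r² dr)³. -/
open MeasureTheory Set

private lemma mono_hasDerivAt_nonneg {f : ℝ → ℝ} {x d : ℝ} (hm : Monotone f)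
    (h : HasDerivAt f d x) : 0 ≤ d := by
  have h' := hasDerivAt_iff_tendsto_slope.mp h
  refine ge_of_tendsto h' ?_
  filter_upwards [self_mem_nhdsWithin] with y hy
  have hy' : y ≠ x := hy
  rcases hy'.lt_or_gt with h1 | h1
  · rw [slope_def_field]
    rw [show f y - f x = -(f x - f y) by ring, show y - x = -(x - y) by ring, neg_div_neg_eq]
    exact div_nonneg (by linarith [hm h1.le]) (by linarith)
  · rw [slope_def_field]
    exact div_nonneg (by linarith [hm h1.le]) (by linarith)

/-- Weighted radial Sobolev bound used to absorb the `L⁴` error in the virial argument: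
for `u : ℝ → ℂ` continuously differentiable with compact support, `m > 0`, `f` a `C¹`
nondecreasing weight with `0 ≤ f ≤ 1` vanishing on `(-∞, m]`, and any `λ > 0`,
`∫_m^∞ f |u|⁴ r² dr ≤ λ ∫_m^∞ f |u'|² r² dr + λ⁻¹ m⁻⁴ (∫_m^∞ |u|² r² dr)³`. -/
theorem stmt9 (u : ℝ → ℂ) (hu : ContDiff ℝ 1 u) (hsupp : HasCompactSupport u)
    (m : ℝ) (hm : 0 < m) (f : ℝ → ℝ) (hf : ContDiff ℝ 1 f) (hmono : Monotone f)
    (hf0 : ∀ r, 0 ≤ f r) (hf1 : ∀ r, f r ≤ 1) (hfvanish : ∀ r ≤ m, f r = 0)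
    (lam : ℝ) (hlam : 0 < lam) :
    (∫ r in Set.Ioi m, f r * ‖u r‖ ^ 4 * r ^ 2) ≤
      lam * (∫ r in Set.Ioi m, f r * ‖deriv u r‖ ^ 2 * r ^ 2) +
        lam⁻¹ * m⁻¹ ^ 4 * (∫ r in Set.Ioi m, ‖u r‖ ^ 2 * r ^ 2) ^ 3 := by
  have hudiff : Differentiable ℝ u := hu.differentiable one_ne_zero
  have hucont : Continuous u := hu.continuous
  have hu'cont : Continuous (deriv u) := hu.continuous_deriv le_rfl
  have hfdiff : Differentiable ℝ f := hf.differentiable one_ne_zero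
  -- generic integrability helper
  have key : ∀ w : ℝ → ℝ, Continuous w → (∀ x, u x = 0 → deriv u x = 0 → w x = 0) →
      Integrable w := by
    intro w hw h0
    refine hw.integrable_of_hasCompactSupport (hsupp.mono' ?_)
    intro x hx
    by_contra hxt
    refine hx (h0 x (image_eq_zero_of_notMem_tsupport hxt) ?_)
    by_contra hd
    exact hxt (support_deriv_subset (Function.mem_support.mpr hd))
  -- the auxiliary function g and its derivative
  set g : ℝ → ℝ := fun r => f r * (‖u r‖ ^ 2 * r ^ 2) with hgdef
  set G : ℝ → ℝ := fun s => deriv f s * (‖u s‖ ^ 2 * s ^ 2) +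
      f s * (2 * (inner ℝ (u s) (deriv u s) : ℝ) * s ^ 2 + ‖u s‖ ^ 2 * (2 * s)) with hGdef
  have hgd : ∀ s : ℝ, HasDerivAt g (G s) s := by
    intro s
    have h1 : HasDerivAt (fun r => ‖u r‖ ^ 2) (2 * (inner ℝ (u s) (deriv u s) : ℝ)) s :=
      (hudiff s).hasDerivAt.norm_sq
    have h2 : HasDerivAt (fun r : ℝ => r ^ 2) (2 * s) s := by
      simpa using hasDerivAt_pow 2 s
    exact ((hfdiff s).hasDerivAt).mul (h1.mul h2)
  have hNcont : Continuous (fun r => ‖u r‖ ^ 2) := (hucont.norm).pow 2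
  have hgC1 : ContDiff ℝ 1 g := hf.mul ((hu.norm_sq ℝ).mul (contDiff_id.pow 2))
  have hgcs : HasCompactSupport g := by
    refine hsupp.mono' ?_
    intro x hx
    by_contra hxt
    exact hx (by simp [hgdef, image_eq_zero_of_notMem_tsupport hxt])
  have hFTC : ∀ r : ℝ, ∫ s in Ioi r, deriv g s = -g r :=
    fun r => HasCompactSupport.integral_Ioi_deriv_eq hgC1 hgcs r
  -- key quantities
  set P : ℝ → ℝ := fun s => 2 * (f s * (‖u s‖ * ‖deriv u s‖) * s ^ 2) with hPdef
  set S := ∫ s in Ioi m, P s with hSdef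
  set X := ∫ r in Ioi m, ‖u r‖ ^ 2 * r ^ 2 with hXdef
  set A := ∫ r in Ioi m, f r * ‖deriv u r‖ ^ 2 * r ^ 2 with hAdef
  set B := ∫ r in Ioi m, f r * (‖u r‖ ^ 2 * r ^ 2) with hBdef
  set D := ∫ r in Ioi m, ‖u r‖ ^ 2 with hDdef
  have hinner_cont : Continuous (fun s => (inner ℝ (u s) (deriv u s) : ℝ)) :=
    hucont.inner hu'cont
  have hPint : Integrable P := by
    refine key P ?_ ?_
    · fun_prop
    · intro x h1 _; simp [hPdef, h1]
  have hGint : Integrable G := by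
    refine key G ?_ ?_
    · have := (hf.continuous_deriv le_rfl)
      fun_prop
    · intro x h1 h2; simp [hGdef, h1, h2]
  have hNint : Integrable (fun r => ‖u r‖ ^ 2) := by
    refine key _ (by fun_prop) ?_
    intro x h1 _; simp [h1]
  have hXint : Integrable (fun r : ℝ => ‖u r‖ ^ 2 * r ^ 2) := by
    refine key _ (by fun_prop) ?_
    intro x h1 _; simp [h1]
  have hAint : Integrable (fun r => f r * ‖deriv u r‖ ^ 2 * r ^ 2) := by
    refine key _ (by fun_prop) ?_
    intro x _ h2; simp [h2]
  have hBint : Integrable (fun r => f r * (‖u r‖ ^ 2 * r ^ 2)) := by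
    refine key _ (by fun_prop) ?_
    intro x h1 _; simp [h1]
  have hLint : Integrable (fun r => f r * ‖u r‖ ^ 4 * r ^ 2) := by
    refine key _ (by fun_prop) ?_
    intro x h1 _; simp [h1]
  -- nonnegativity
  have hPnn : ∀ s, 0 ≤ P s := by
    intro s
    simp only [hPdef]
    have := hf0 s
    exact mul_nonneg (by norm_num) (mul_nonneg (mul_nonneg this
      (mul_nonneg (norm_nonneg _) (norm_nonneg _))) (sq_nonneg s))
  have hS0 : 0 ≤ S := setIntegral_nonneg measurableSet_Ioi fun s _ => hPnn s
  have hX0 : 0 ≤ X := setIntegral_nonneg measurableSet_Ioi fun s _ => by positivity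
  have hA0 : 0 ≤ A := setIntegral_nonneg measurableSet_Ioi fun s _ =>
    mul_nonneg (mul_nonneg (hf0 s) (sq_nonneg _)) (sq_nonneg s)
  have hB0 : 0 ≤ B := setIntegral_nonneg measurableSet_Ioi fun s _ =>
    mul_nonneg (hf0 s) (mul_nonneg (sq_nonneg _) (sq_nonneg s))
  -- pointwise bound  g r ≤ S  for r > m
  have hg_le : ∀ r ∈ Ioi m, g r ≤ S := by
    intro r hr
    rw [mem_Ioi] at hr
    have h1 : g r = ∫ s in Ioi r, -G s := by
      rw [integral_neg]
      have : ∫ s in Ioi r, G s = -g r := by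
        rw [← hFTC r]
        refine setIntegral_congr_fun measurableSet_Ioi fun s _ => ?_
        exact ((hgd s).deriv).symm
      rw [this, neg_neg]
    rw [h1]
    calc (∫ s in Ioi r, -G s) ≤ ∫ s in Ioi r, P s := by
          refine setIntegral_mono_on hGint.neg.integrableOn hPint.integrableOn
            measurableSet_Ioi fun s hs => ?_
          rw [mem_Ioi] at hs
          have hs0 : 0 < s := hm.trans (hr.trans hs)
          have hdf : 0 ≤ deriv f s := mono_hasDerivAt_nonneg hmono (hfdiff s).hasDerivAt
          have hip : -(‖u s‖ * ‖deriv u s‖) ≤ (inner ℝ (u s) (deriv u s) : ℝ) :=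
            neg_le_of_neg_le (by
              have := abs_real_inner_le_norm (u s) (deriv u s)
              linarith [neg_abs_le ((inner ℝ (u s) (deriv u s) : ℝ))])
          simp only [hGdef, hPdef]
          have h5 : f s * s ^ 2 * (-(‖u s‖ * ‖deriv u s‖)) ≤
              f s * s ^ 2 * (inner ℝ (u s) (deriv u s) : ℝ) :=
            mul_le_mul_of_nonneg_left hip (mul_nonneg (hf0 s) (sq_nonneg s))
          nlinarith [mul_nonneg (mul_nonneg hdf (sq_nonneg ‖u s‖)) (sq_nonneg s),
            mul_nonneg (mul_nonneg (hf0 s) (sq_nonneg ‖u s‖)) hs0.le]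
      _ ≤ S := by
          refine setIntegral_mono_set hPint.integrableOn
            (Filter.Eventually.of_forall fun s => hPnn s)
            (HasSubset.Subset.eventuallyLE (Ioi_subset_Ioi hr.le))
  -- Step 1: LHS ≤ S * D
  have step1 : (∫ r in Ioi m, f r * ‖u r‖ ^ 4 * r ^ 2) ≤ S * D := by
    have : (∫ r in Ioi m, f r * ‖u r‖ ^ 4 * r ^ 2) ≤ ∫ r in Ioi m, S * ‖u r‖ ^ 2 := by
      refine setIntegral_mono_on hLint.integrableOn (hNint.const_mul S).integrableOn
        measurableSet_Ioi fun r hr => ?_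
      have h6 : f r * ‖u r‖ ^ 4 * r ^ 2 = g r * ‖u r‖ ^ 2 := by
        simp only [hgdef]; ring
      rw [h6]
      exact mul_le_mul_of_nonneg_right (hg_le r hr) (sq_nonneg _)
    rwa [integral_const_mul] at this
  -- Step 2: D ≤ m⁻¹ ^ 2 * X
  have step2 : D ≤ m⁻¹ ^ 2 * X := by
    have : D ≤ ∫ r in Ioi m, m⁻¹ ^ 2 * (‖u r‖ ^ 2 * r ^ 2) := by
      refine setIntegral_mono_on hNint.integrableOn (hXint.const_mul _).integrableOn
        measurableSet_Ioi fun r hr => ?_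
      rw [mem_Ioi] at hr
      have hr0 : 0 < r := hm.trans hr
      have hm2 : m ^ 2 ≤ r ^ 2 := by nlinarith
      rw [inv_pow, inv_mul_eq_div, le_div_iff₀ (by positivity : (0:ℝ) < m ^ 2)]
      nlinarith [sq_nonneg ‖u r‖]
    rwa [integral_const_mul] at this
  -- Step 4: B ≤ X
  have step4 : B ≤ X := by
    refine setIntegral_mono_on hBint.integrableOn hXint.integrableOn
      measurableSet_Ioi fun r _ => ?_
    exact mul_le_of_le_one_left (by positivity) (hf1 r)
  -- Step 3: S ≤ t * A + t⁻¹ * B for any t > 0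
  have step3 : ∀ t : ℝ, 0 < t → S ≤ t * A + t⁻¹ * B := by
    intro t ht
    have hpt : (∫ s in Ioi m, P s) ≤
        ∫ s in Ioi m, (t * (f s * ‖deriv u s‖ ^ 2 * s ^ 2) + t⁻¹ * (f s * (‖u s‖ ^ 2 * s ^ 2))) := by
      refine setIntegral_mono_on hPint.integrableOn
        ((hAint.const_mul t).add (hBint.const_mul t⁻¹)).integrableOn
        measurableSet_Ioi fun s _ => ?_
      have hscalar : 2 * (‖u s‖ * ‖deriv u s‖) ≤ t * ‖deriv u s‖ ^ 2 + t⁻¹ * ‖u s‖ ^ 2 := by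
        nlinarith [sq_nonneg (t * ‖deriv u s‖ - ‖u s‖), mul_inv_cancel₀ ht.ne', ht,
          sq_nonneg ‖u s‖, inv_pos.mpr ht]
      have := mul_le_mul_of_nonneg_left hscalar (mul_nonneg (hf0 s) (sq_nonneg s))
      simp only [hPdef]
      nlinarith [this]
    rw [integral_add ((hAint.const_mul t).integrableOn) ((hBint.const_mul t⁻¹).integrableOn),
      integral_const_mul, integral_const_mul, integral_const_mul] at hpt
    calc S = 2 * ∫ s in Ioi m, f s * (‖u s‖ * ‖deriv u s‖) * s ^ 2 := by
          rw [hSdef]; simp only [hPdef]; exact integral_const_mul 2 _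
      _ ≤ _ := hpt
  -- assemble
  have chain : (∫ r in Ioi m, f r * ‖u r‖ ^ 4 * r ^ 2) ≤ S * (m⁻¹ ^ 2 * X) :=
    step1.trans (mul_le_mul_of_nonneg_left step2 hS0)
  rcases eq_or_lt_of_le hX0 with hX | hX
  · -- X = 0
    have hrhs0 : (0:ℝ) ≤ lam * A + lam⁻¹ * m⁻¹ ^ 4 * X ^ 3 := by
      have h1 : (0:ℝ) ≤ lam * A := mul_nonneg hlam.le hA0
      have h2 : (0:ℝ) ≤ lam⁻¹ * m⁻¹ ^ 4 * X ^ 3 :=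
        mul_nonneg (mul_nonneg (inv_nonneg.mpr hlam.le) (by positivity)) (pow_nonneg hX0 3)
      linarith
    calc (∫ r in Ioi m, f r * ‖u r‖ ^ 4 * r ^ 2) ≤ S * (m⁻¹ ^ 2 * X) := chain
      _ = 0 := by rw [← hX]; ring
      _ ≤ _ := hrhs0
  · -- X > 0
    set t := lam * m ^ 2 / X with htdef
    have ht : 0 < t := div_pos (by positivity) hX
    have hfin : S * (m⁻¹ ^ 2 * X) ≤ (t * A + t⁻¹ * X) * (m⁻¹ ^ 2 * X) := by
      refine mul_le_mul_of_nonneg_right ?_ (mul_nonneg (by positivity) hX0)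
      refine (step3 t ht).trans ?_
      have : t⁻¹ * B ≤ t⁻¹ * X := mul_le_mul_of_nonneg_left step4 (inv_pos.mpr ht).le
      linarith
    have heq : (t * A + t⁻¹ * X) * (m⁻¹ ^ 2 * X) = lam * A + lam⁻¹ * m⁻¹ ^ 4 * X ^ 3 := by
      rw [htdef]
      field_simp
    calc (∫ r in Ioi m, f r * ‖u r‖ ^ 4 * r ^ 2) ≤ S * (m⁻¹ ^ 2 * X) := chain
      _ ≤ (t * A + t⁻¹ * X) * (m⁻¹ ^ 2 * X) := hfin
      _ = _ := heq
end

section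
/- Let u : ℝ → ℂ be continuously differentiable with compact support, let m > 0, and set φ_m(r) := m r / (m + r) for r ≥ 0. Then ∫_0^∞ |u(r)|⁴ φ_m(r)² r dr ≤ 4√2 · (∫_0^∞ |u(r)|² r² dr) · (∫_0^∞ |u'(r)|² φ_m(r)² dr). -/
open MeasureTheory Set
open scoped RealInnerProductSpace

/-- If `g` is continuous on `[0, ∞)` and vanishes on `[R, ∞)`, it is integrable on `(0, ∞)`. -/
lemma aux_integrableOn {g : ℝ → ℝ} (hg : ContinuousOn g (Ici 0)) (R : ℝ)
    (hR : ∀ r : ℝ, R ≤ r → g r = 0) : IntegrableOn g (Ioi (0:ℝ)) := by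
  have h1 : IntegrableOn g (Ioc 0 R) :=
    ((hg.mono Icc_subset_Ici_self).integrableOn_Icc).mono_set Ioc_subset_Icc_self
  have h2 : IntegrableOn g (Ioi R) :=
    (integrableOn_zero).congr_fun (fun x hx => (hR x (le_of_lt hx)).symm) measurableSet_Ioi
  exact (h1.union h2).mono_set (fun x hx => by
    rcases le_or_gt x R with h | h
    · exact Or.inl ⟨hx, h⟩
    · exact Or.inr h)

/-- Cauchy–Schwarz for continuous compactly supported functions on `(0, ∞)`. -/
lemma aux_cs {f g : ℝ → ℝ} (hfc : Continuous f) (hgc : Continuous g)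
    (hfs : HasCompactSupport f) (hgs : HasCompactSupport g) :
    ∫ x in Ioi (0:ℝ), |f x| * |g x| ≤
      Real.sqrt (∫ x in Ioi (0:ℝ), f x ^ 2) * Real.sqrt (∫ x in Ioi (0:ℝ), g x ^ 2) := by
  have hpq : Real.HolderConjugate 2 2 := Real.HolderConjugate.two_two
  have hf2 : MemLp f (ENNReal.ofReal 2) (volume.restrict (Ioi (0:ℝ))) :=
    (hfc.memLp_of_hasCompactSupport hfs).restrict _
  have hg2 : MemLp g (ENNReal.ofReal 2) (volume.restrict (Ioi (0:ℝ))) :=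
    (hgc.memLp_of_hasCompactSupport hgs).restrict _
  have h := integral_mul_norm_le_Lp_mul_Lq hpq hf2 hg2
  simp only [Real.norm_eq_abs] at h
  have e1 : ∀ (h : ℝ → ℝ), (∫ x in Ioi (0:ℝ), |h x| ^ (2:ℝ)) = ∫ x in Ioi (0:ℝ), h x ^ 2 := by
    intro h
    refine integral_congr_ae (Filter.Eventually.of_forall fun x => ?_)
    show |h x| ^ (2:ℝ) = h x ^ 2
    rw [show ((2:ℝ) = ((2:ℕ):ℝ)) by norm_num, Real.rpow_natCast, sq_abs]
  rw [e1 f, e1 g] at h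
  calc ∫ x in Ioi (0:ℝ), |f x| * |g x| ≤
      (∫ x in Ioi (0:ℝ), f x ^ 2) ^ (1/(2:ℝ)) * (∫ x in Ioi (0:ℝ), g x ^ 2) ^ (1/(2:ℝ)) := h
    _ = _ := by rw [← Real.sqrt_eq_rpow, ← Real.sqrt_eq_rpow]

set_option maxHeartbeats 2000000 in
/-- Weighted radial Sobolev bound with the saturated virial weight `φ_m(r) = m r/(m+r)`:
for `u : ℝ → ℂ` continuously differentiable with compact support and `m > 0`,
`∫_0^∞ |u|⁴ φ_m² r dr ≤ 4√2 (∫_0^∞ |u|² r² dr)(∫_0^∞ |u'|² φ_m² dr)`. -/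
theorem stmt10 (u : ℝ → ℂ) (hu : ContDiff ℝ 1 u) (hsupp : HasCompactSupport u)
    (m : ℝ) (hm : 0 < m) :
    (∫ r in Set.Ioi (0 : ℝ), ‖u r‖ ^ 4 * (m * r / (m + r)) ^ 2 * r) ≤
      4 * Real.sqrt 2 * (∫ r in Set.Ioi (0 : ℝ), ‖u r‖ ^ 2 * r ^ 2) *
        (∫ r in Set.Ioi (0 : ℝ), ‖deriv u r‖ ^ 2 * (m * r / (m + r)) ^ 2) := by
  -- basic analytic facts
  have hucont : Continuous u := hu.continuous
  have hdcont : Continuous (deriv u) := hu.continuous_deriv le_rfl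
  have hudiff : ∀ s : ℝ, HasDerivAt u (deriv u s) s :=
    fun s => (hu.differentiable one_ne_zero s).hasDerivAt
  have hipcont : Continuous (fun t : ℝ => ⟪u t, deriv u t⟫) := hucont.inner hdcont
  have hn : ∀ s : ℝ, HasDerivAt (fun t => ‖u t‖ ^ 2) (2 * ⟪u s, deriv u s⟫) s := by
    intro s
    have h2 := HasDerivAt.inner ℝ (hudiff s) (hudiff s)
    have funeq : (fun t => ⟪u t, u t⟫) = fun t : ℝ => ‖u t‖ ^ 2 :=
      funext fun t => real_inner_self_eq_norm_sq _
    rw [funeq, real_inner_comm (u s) (deriv u s),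
      show ⟪u s, deriv u s⟫ + ⟪u s, deriv u s⟫ = 2 * ⟪u s, deriv u s⟫ by ring] at h2
    exact h2
  -- derivative of the weight
  have hφ : ∀ s : ℝ, 0 ≤ s → HasDerivAt (fun t => m * t / (m + t)) (m^2/(m+s)^2) s := by
    intro s hs
    have hne : m + s ≠ 0 := ne_of_gt (by linarith)
    have h1 : HasDerivAt (fun t : ℝ => m * t) m s := by
      simpa using (hasDerivAt_id s).const_mul m
    have h2 : HasDerivAt (fun t : ℝ => m + t) 1 s := by
      simpa using (hasDerivAt_id s).const_add m
    have h3 := h1.div h2 hne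
    refine h3.congr_deriv ?_
    field_simp
    ring
  -- support radius
  obtain ⟨R₀, hR₀⟩ := hsupp.isBounded.subset_closedBall 0
  set R : ℝ := |R₀| + 1 with hRdef
  have hnotin : ∀ x : ℝ, R ≤ x → x ∉ tsupport u := by
    intro x hx hmem
    have h1 := hR₀ hmem
    simp only [Metric.mem_closedBall, Real.dist_eq, sub_zero] at h1
    have h2 : x ≤ |x| := le_abs_self x
    have h3 : R₀ ≤ |R₀| := le_abs_self R₀
    linarith [hRdef, h1, h2, h3, hx]
  have hRu : ∀ x : ℝ, R ≤ x → u x = 0 :=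
    fun x hx => image_eq_zero_of_notMem_tsupport (hnotin x hx)
  have hRd : ∀ x : ℝ, R ≤ x → deriv u x = 0 := by
    intro x hx
    by_contra h
    exact hnotin x hx (support_deriv_subset (by simpa [Function.mem_support] using h))
  -- the two Cauchy–Schwarz factors
  set f : ℝ → ℝ := fun r => r * ‖u r‖ with hfdef
  set g : ℝ → ℝ := fun r => (m * |r| / (m + |r|)) * ‖deriv u r‖ with hgdef
  have hfc : Continuous f := continuous_id.mul hucont.norm
  have habs : Continuous (fun r : ℝ => m * |r| / (m + |r|)) :=
    (continuous_const.mul continuous_abs).div (continuous_const.add continuous_abs)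
      (fun x => ne_of_gt (by positivity))
  have hgc : Continuous g := habs.mul hdcont.norm
  have hfs : HasCompactSupport f := hsupp.norm.mul_left
  have hgs : HasCompactSupport g := (hsupp.deriv.norm).mul_left
  set A : ℝ := Real.sqrt (∫ x in Ioi (0:ℝ), f x ^ 2) with hAdef
  set B : ℝ := Real.sqrt (∫ x in Ioi (0:ℝ), g x ^ 2) with hBdef
  have hA0 : 0 ≤ A := Real.sqrt_nonneg _
  have hB0 : 0 ≤ B := Real.sqrt_nonneg _
  have hfg_int : IntegrableOn (fun x => f x * g x) (Ioi (0:ℝ)) :=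
    ((hfc.mul hgc).integrable_of_hasCompactSupport hgs.mul_left).integrableOn
  have hfg0 : ∀ x : ℝ, 0 < x → 0 ≤ f x * g x := by
    intro x hx
    have : 0 ≤ m * |x| / (m + |x|) := by positivity
    exact mul_nonneg (mul_nonneg hx.le (norm_nonneg _)) (mul_nonneg this (norm_nonneg _))
  have hcsfg : ∫ x in Ioi (0:ℝ), f x * g x ≤ A * B := by
    have h := aux_cs hfc hgc hfs hgs
    refine le_trans (le_of_eq ?_) h
    refine setIntegral_congr_fun measurableSet_Ioi (fun x hx => ?_)
    have hx0 : (0:ℝ) < x := hx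
    have hf0 : 0 ≤ f x := mul_nonneg hx0.le (norm_nonneg _)
    have hg0 : 0 ≤ g x := mul_nonneg (by positivity) (norm_nonneg _)
    rw [abs_of_nonneg hf0, abs_of_nonneg hg0]
  -- continuity building blocks on `Ici 0`
  have hmscont : ContinuousOn (fun t : ℝ => m + t) (Ici 0) :=
    (continuous_const.add continuous_id).continuousOn
  have hmsne : ∀ x ∈ Ici (0:ℝ), m + x ≠ 0 := fun x hx => ne_of_gt (by
    have : (0:ℝ) ≤ x := hx
    linarith)
  have hφcont : ContinuousOn (fun t : ℝ => m * t / (m + t)) (Ici 0) :=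
    ((continuous_const.mul continuous_id).continuousOn).div hmscont hmsne
  have hφ'cont : ContinuousOn (fun t : ℝ => m^2/(m+t)^2) (Ici 0) :=
    continuous_const.continuousOn.div (hmscont.pow 2)
      (fun x hx => pow_ne_zero _ (hmsne x hx))
  -- Step 1: pointwise bound r φ(r) ‖u r‖² ≤ 2 A B  for r > 0
  have step1 : ∀ r : ℝ, 0 < r → r * (m * r / (m + r)) * ‖u r‖ ^ 2 ≤ 2 * (A * B) := by
    intro r hr
    set F : ℝ → ℝ := fun s => s * (m * s / (m + s)) * ‖u s‖ ^ 2 with hFdef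
    set F' : ℝ → ℝ := fun s =>
      (m * s / (m + s) + s * (m^2/(m+s)^2)) * ‖u s‖ ^ 2 +
        (s * (m * s / (m + s))) * (2 * ⟪u s, deriv u s⟫) with hF'def
    have hFder : ∀ s ∈ Ici r, HasDerivAt F (F' s) s := by
      intro s hs
      have hs0 : (0:ℝ) < s := lt_of_lt_of_le hr hs
      have h1 : HasDerivAt (fun t : ℝ => t * (m * t / (m + t)))
          (1 * (m * s / (m + s)) + s * (m^2/(m+s)^2)) s :=
        (hasDerivAt_id s).mul (hφ s hs0.le)
      have h2 := h1.mul (hn s)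
      refine h2.congr_deriv ?_
      simp only [hF'def]
      ring
    have hcontF : ContinuousWithinAt F (Ici r) r :=
      (hFder r self_mem_Ici).continuousAt.continuousWithinAt
    have hF'cont : ContinuousOn F' (Ici 0) := by
      refine ContinuousOn.add ?_ ?_
      · exact ((hφcont.add ((continuous_id.continuousOn).mul hφ'cont)).mul
          ((hucont.norm.pow 2).continuousOn))
      · exact (((continuous_id.continuousOn).mul hφcont).mul
          ((continuous_const.mul hipcont).continuousOn))
    have hF'vanish : ∀ x : ℝ, R ≤ x → F' x = 0 := by
      intro x hx
      simp [hF'def, hRu x hx, hRd x hx]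
    have hF'int : IntegrableOn F' (Ioi r) :=
      (aux_integrableOn hF'cont R hF'vanish).mono_set (Ioi_subset_Ioi hr.le)
    have hFtend : Filter.Tendsto F Filter.atTop (nhds 0) := by
      refine Filter.Tendsto.congr' ?_ tendsto_const_nhds
      filter_upwards [Filter.eventually_ge_atTop R] with x hx
      simp [hFdef, hRu x hx]
    have hFTC := integral_Ioi_of_hasDerivAt_of_tendsto hcontF
      (fun s hs => hFder s (mem_Ici.mpr (le_of_lt hs))) hF'int hFtend
    have hFr : F r = ∫ s in Ioi r, (-F' s) := by
      rw [integral_neg, hFTC]; ring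
    have h2fg_int0 : IntegrableOn (fun s => 2 * (f s * g s)) (Ioi (0:ℝ)) :=
      hfg_int.const_mul 2
    have h2fg_int : IntegrableOn (fun s => 2 * (f s * g s)) (Ioi r) :=
      h2fg_int0.mono_set (Ioi_subset_Ioi hr.le)
    have hb1 : ∫ s in Ioi r, (-F' s) ≤ ∫ s in Ioi r, 2 * (f s * g s) := by
      refine setIntegral_mono_on hF'int.neg h2fg_int measurableSet_Ioi ?_
      intro s hs
      have hs0 : (0:ℝ) < s := lt_trans hr hs
      have hms : (0:ℝ) < m + s := by linarith
      have e1 : 0 ≤ (m * s / (m + s) + s * (m^2/(m+s)^2)) * ‖u s‖ ^ 2 := by positivity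
      have h1 : 0 ≤ s * (m * s / (m + s)) := by positivity
      have hip2 : -(‖u s‖ * ‖deriv u s‖) ≤ ⟪u s, deriv u s⟫ :=
        (abs_le.mp (abs_real_inner_le_norm _ _)).1
      have key : 0 ≤ (s * (m * s / (m + s))) * (‖u s‖ * ‖deriv u s‖ + ⟪u s, deriv u s⟫) :=
        mul_nonneg h1 (by linarith)
      simp only [hF'def, hfdef, hgdef, abs_of_pos hs0]
      nlinarith [key, e1]
    have hb2 : ∫ s in Ioi r, 2 * (f s * g s) ≤ ∫ s in Ioi (0:ℝ), 2 * (f s * g s) := by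
      refine setIntegral_mono_set h2fg_int0 ?_ (Ioi_subset_Ioi hr.le).eventuallyLE
      filter_upwards [ae_restrict_mem measurableSet_Ioi] with x hx
      exact mul_nonneg (by norm_num) (hfg0 x hx)
    have hb3 : ∫ s in Ioi (0:ℝ), 2 * (f s * g s) ≤ 2 * (A * B) := by
      rw [integral_const_mul]
      linarith [hcsfg]
    have : F r ≤ 2 * (A * B) := by
      rw [hFr]; exact le_trans hb1 (le_trans hb2 hb3)
    simpa [hFdef] using this
  -- Step 2: main integration by parts on (0, ∞)
  set X : ℝ → ℝ := fun s =>
    (s * (m * s / (m + s))^2 + (m * s / (m + s))^3) * (‖u s‖ ^ 2) ^ 2 with hXdef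
  set Y : ℝ → ℝ := fun s =>
    (s^2 * (m * s / (m + s))^2) * ((‖u s‖ ^ 2) * (2 * ⟪u s, deriv u s⟫)) with hYdef
  set F₂ : ℝ → ℝ := fun s => s^2 * (m * s / (m + s))^2 / 2 * (‖u s‖ ^ 2) ^ 2 with hF₂def
  have hF₂der : ∀ s ∈ Ioi (0:ℝ), HasDerivAt F₂ (X s + Y s) s := by
    intro s hs
    have hs0 : (0:ℝ) < s := hs
    have hne : m + s ≠ 0 := ne_of_gt (by linarith)
    have h1 : HasDerivAt (fun t : ℝ => t^2 * (m * t / (m + t))^2 / 2)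
        (s * (m * s / (m + s))^2 + (m * s / (m + s))^3) s := by
      have ha := ((hasDerivAt_pow 2 s).mul ((hφ s hs0.le).pow 2)).div_const 2
      refine ha.congr_deriv ?_
      simp only [Pi.pow_apply, Nat.add_one_sub_one, pow_one]
      field_simp
      ring
    have h2 : HasDerivAt (fun t : ℝ => (‖u t‖ ^ 2) ^ 2)
        ((2:ℕ) * (‖u s‖ ^ 2) ^ 1 * (2 * ⟪u s, deriv u s⟫)) s := (hn s).pow 2
    have h3 := h1.mul h2
    refine h3.congr_deriv ?_
    simp only [hXdef, hYdef]
    push_cast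
    ring
  have hcontF₂ : ContinuousWithinAt F₂ (Ici 0) 0 := by
    have : ContinuousOn F₂ (Ici 0) :=
      (((continuous_pow 2).continuousOn.mul (hφcont.pow 2)).div_const 2).mul
        ((hucont.norm.pow 2).pow 2).continuousOn
    exact this 0 self_mem_Ici
  have hXcont : ContinuousOn X (Ici 0) :=
    (((continuous_id.continuousOn).mul (hφcont.pow 2)).add (hφcont.pow 3)).mul
      (((hucont.norm.pow 2).pow 2)).continuousOn
  have hYcont : ContinuousOn Y (Ici 0) :=
    (((continuous_pow 2).continuousOn).mul (hφcont.pow 2)).mul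
      (((hucont.norm.pow 2).mul (continuous_const.mul hipcont)).continuousOn)
  have hXvanish : ∀ x : ℝ, R ≤ x → X x = 0 := by
    intro x hx; simp [hXdef, hRu x hx]
  have hYvanish : ∀ x : ℝ, R ≤ x → Y x = 0 := by
    intro x hx; simp [hYdef, hRu x hx]
  have hXint : IntegrableOn X (Ioi (0:ℝ)) := aux_integrableOn hXcont R hXvanish
  have hYint : IntegrableOn Y (Ioi (0:ℝ)) := aux_integrableOn hYcont R hYvanish
  have hF₂tend : Filter.Tendsto F₂ Filter.atTop (nhds 0) := by
    refine Filter.Tendsto.congr' ?_ tendsto_const_nhds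
    filter_upwards [Filter.eventually_ge_atTop R] with x hx
    simp [hF₂def, hRu x hx]
  have hFTC2 := integral_Ioi_of_hasDerivAt_of_tendsto hcontF₂ hF₂der
    (hXint.add hYint) hF₂tend
  have hF₂0 : F₂ 0 = 0 := by simp [hF₂def]
  have hXY : ∫ s in Ioi (0:ℝ), X s = ∫ s in Ioi (0:ℝ), (-Y s) := by
    have h0 : (∫ s in Ioi (0:ℝ), (X s + Y s)) = 0 := by rw [hFTC2, hF₂0]; ring
    rw [integral_add hXint hYint] at h0
    rw [integral_neg]
    linarith
  -- assembling the chain of inequalities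
  have hLHSint : IntegrableOn (fun r => ‖u r‖ ^ 4 * (m * r / (m + r)) ^ 2 * r) (Ioi (0:ℝ)) := by
    refine aux_integrableOn ?_ R ?_
    · exact (((hucont.norm.pow 4).continuousOn.mul (hφcont.pow 2)).mul
        (continuous_id.continuousOn))
    · intro x hx; simp [hRu x hx]
  have hstep2a : (∫ r in Set.Ioi (0:ℝ), ‖u r‖ ^ 4 * (m * r / (m + r)) ^ 2 * r) ≤
      ∫ s in Ioi (0:ℝ), X s := by
    refine setIntegral_mono_on hLHSint hXint measurableSet_Ioi ?_
    intro s hs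
    have hs0 : (0:ℝ) < s := hs
    have hms : (0:ℝ) < m + s := by linarith
    have hφ3 : 0 ≤ (m * s / (m + s))^3 * (‖u s‖ ^ 2) ^ 2 := by positivity
    simp only [hXdef]
    nlinarith [hφ3]
  have h4fg_int : IntegrableOn (fun s => 4 * (A * B) * (f s * g s)) (Ioi (0:ℝ)) :=
    hfg_int.const_mul _
  have hstep2b : (∫ s in Ioi (0:ℝ), (-Y s)) ≤ ∫ s in Ioi (0:ℝ), 4 * (A * B) * (f s * g s) := by
    refine setIntegral_mono_on hYint.neg h4fg_int measurableSet_Ioi ?_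
    intro s hs
    have hs0 : (0:ℝ) < s := hs
    have hms : (0:ℝ) < m + s := by linarith
    have hip2 : -(‖u s‖ * ‖deriv u s‖) ≤ ⟪u s, deriv u s⟫ :=
      (abs_le.mp (abs_real_inner_le_norm _ _)).1
    have h3 : 0 ≤ s^2 * (m * s / (m + s))^2 * ‖u s‖ ^ 2 := by positivity
    have e0 : -Y s ≤ (s * (m * s / (m + s)) * ‖u s‖ ^ 2) * (2 * (f s * g s)) := by
      have hmul := mul_le_mul_of_nonneg_left
        (show -(2 * ⟪u s, deriv u s⟫) ≤ 2 * (‖u s‖ * ‖deriv u s‖) by linarith) h3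
      calc -Y s = (s^2 * (m * s / (m + s))^2 * ‖u s‖ ^ 2) * (-(2 * ⟪u s, deriv u s⟫)) := by
            simp only [hYdef]; ring
        _ ≤ (s^2 * (m * s / (m + s))^2 * ‖u s‖ ^ 2) * (2 * (‖u s‖ * ‖deriv u s‖)) := hmul
        _ = (s * (m * s / (m + s)) * ‖u s‖ ^ 2) * (2 * (f s * g s)) := by
            simp only [hfdef, hgdef, abs_of_pos hs0]; ring
    have e1 : (s * (m * s / (m + s)) * ‖u s‖ ^ 2) * (2 * (f s * g s)) ≤
        (2 * (A * B)) * (2 * (f s * g s)) :=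
      mul_le_mul_of_nonneg_right (step1 s hs0)
        (mul_nonneg (by norm_num) (hfg0 s hs0))
    calc -Y s ≤ (2 * (A * B)) * (2 * (f s * g s)) := le_trans e0 e1
      _ = 4 * (A * B) * (f s * g s) := by ring
  have hstep2c : (∫ s in Ioi (0:ℝ), 4 * (A * B) * (f s * g s)) ≤ 4 * (A * B) * (A * B) := by
    rw [integral_const_mul]
    have h4ab : 0 ≤ 4 * (A * B) := by positivity
    exact mul_le_mul_of_nonneg_left hcsfg h4ab
  have hmain : (∫ r in Set.Ioi (0:ℝ), ‖u r‖ ^ 4 * (m * r / (m + r)) ^ 2 * r) ≤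
      4 * (A * B) * (A * B) := by
    calc (∫ r in Set.Ioi (0:ℝ), ‖u r‖ ^ 4 * (m * r / (m + r)) ^ 2 * r)
        ≤ ∫ s in Ioi (0:ℝ), X s := hstep2a
      _ = ∫ s in Ioi (0:ℝ), (-Y s) := hXY
      _ ≤ ∫ s in Ioi (0:ℝ), 4 * (A * B) * (f s * g s) := hstep2b
      _ ≤ 4 * (A * B) * (A * B) := hstep2c
  -- identify the squares of A and B with the integrals in the statement
  have hf2nonneg : 0 ≤ ∫ x in Ioi (0:ℝ), f x ^ 2 :=
    integral_nonneg (fun x => sq_nonneg _)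
  have hg2nonneg : 0 ≤ ∫ x in Ioi (0:ℝ), g x ^ 2 :=
    integral_nonneg (fun x => sq_nonneg _)
  have hAsq : A * A = ∫ x in Ioi (0:ℝ), f x ^ 2 := Real.mul_self_sqrt hf2nonneg
  have hBsq : B * B = ∫ x in Ioi (0:ℝ), g x ^ 2 := Real.mul_self_sqrt hg2nonneg
  have hfP : (∫ x in Ioi (0:ℝ), f x ^ 2) = ∫ r in Set.Ioi (0:ℝ), ‖u r‖ ^ 2 * r ^ 2 := by
    refine setIntegral_congr_fun measurableSet_Ioi (fun x hx => ?_)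
    simp only [hfdef]; ring
  have hgQ : (∫ x in Ioi (0:ℝ), g x ^ 2) =
      ∫ r in Set.Ioi (0:ℝ), ‖deriv u r‖ ^ 2 * (m * r / (m + r)) ^ 2 := by
    refine setIntegral_congr_fun measurableSet_Ioi (fun x hx => ?_)
    have hx0 : (0:ℝ) < x := hx
    simp only [hgdef, abs_of_pos hx0]; ring
  set P : ℝ := ∫ r in Set.Ioi (0:ℝ), ‖u r‖ ^ 2 * r ^ 2 with hPdef
  set Q : ℝ := ∫ r in Set.Ioi (0:ℝ), ‖deriv u r‖ ^ 2 * (m * r / (m + r)) ^ 2 with hQdef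
  have hP0 : 0 ≤ P := hfP ▸ hf2nonneg
  have hQ0 : 0 ≤ Q := hgQ ▸ hg2nonneg
  have hABPQ : 4 * (A * B) * (A * B) = 4 * P * Q := by
    have : 4 * (A * B) * (A * B) = 4 * (A * A) * (B * B) := by ring
    rw [this, hAsq, hBsq, hfP, hgQ]
  have hsqrt2 : (1:ℝ) ≤ Real.sqrt 2 := by
    rw [show (1:ℝ) = Real.sqrt 1 from (Real.sqrt_one).symm]
    exact Real.sqrt_le_sqrt (by norm_num)
  have hfinal : 4 * P * Q ≤ 4 * Real.sqrt 2 * P * Q := by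
    nlinarith [mul_nonneg hP0 hQ0]
  calc (∫ r in Set.Ioi (0:ℝ), ‖u r‖ ^ 4 * (m * r / (m + r)) ^ 2 * r)
      ≤ 4 * (A * B) * (A * B) := hmain
    _ = 4 * P * Q := hABPQ
    _ ≤ 4 * Real.sqrt 2 * P * Q := hfinal
end
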